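/- arXiv:1606.04687 — 5 statements merged into one kernel-verified Lean document; each statement's English description precedes it below -/
import Mathlib

section
/- For continuous maps f, g : 𝕊^N → 𝕊^N with deg f ≠ deg g, one has sup_{x ∈ 𝕊^N} |f(x) - g(x)| = 2, i.e. there exists x with g(x) = -f(x). -/
/-- The unit sphere `𝕊^N ⊂ ℝ^{N+1}`. -/
abbrev Sph (N : ℕ) := Metric.sphere (0 : EuclideanSpace ℝ (Fin (N + 1))) 1

/-- For continuous maps `f, g : 𝕊^N → 𝕊^N` with `deg f ≠ deg g`, one has
`sup_x |f x - g x| = 2`, i.e. there exists `x` with `g x = -f x`.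
The Brouwer degree is taken as any homotopy-invariant integer-valued function `deg`
on continuous self-maps of the sphere. -/
theorem stmt1 (N : ℕ) (deg : C(Sph N, Sph N) → ℤ)
    (hdeg : ∀ f g : C(Sph N, Sph N), f.Homotopic g → deg f = deg g)
    (f g : C(Sph N, Sph N)) (h : deg f ≠ deg g) :
    (⨆ x : Sph N, ‖(f x : EuclideanSpace ℝ (Fin (N + 1))) - (g x : EuclideanSpace ℝ (Fin (N + 1)))‖) = 2 ∧
    ∃ x : Sph N, (g x : EuclideanSpace ℝ (Fin (N + 1))) = -(f x : EuclideanSpace ℝ (Fin (N + 1))) := by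
  have key : ∃ x : Sph N, (g x : EuclideanSpace ℝ (Fin (N + 1)))
      = -(f x : EuclideanSpace ℝ (Fin (N + 1))) := by
    by_contra hc
    push_neg at hc
    apply h
    apply hdeg
    set V : unitInterval × Sph N → EuclideanSpace ℝ (Fin (N + 1)) :=
      fun p => (1 - (p.1 : ℝ)) • (f p.2 : EuclideanSpace ℝ (Fin (N + 1)))
        + (p.1 : ℝ) • (g p.2 : EuclideanSpace ℝ (Fin (N + 1))) with hV
    have hVne : ∀ p, V p ≠ 0 := by
      rintro ⟨t, x⟩ h0
      simp only [hV] at h0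
      have ht0 : (0 : ℝ) ≤ t := t.2.1
      have ht1 : (t : ℝ) ≤ 1 := t.2.2
      have heq : (1 - (t : ℝ)) • (f x : EuclideanSpace ℝ (Fin (N + 1)))
          = -((t : ℝ) • (g x : EuclideanSpace ℝ (Fin (N + 1)))) := by
        linear_combination (norm := module) h0
      have hnorm : ‖(1 - (t : ℝ)) • (f x : EuclideanSpace ℝ (Fin (N + 1)))‖
          = ‖(t : ℝ) • (g x : EuclideanSpace ℝ (Fin (N + 1)))‖ := by
        rw [heq, norm_neg]
      rw [norm_smul, norm_smul, norm_eq_of_mem_sphere, norm_eq_of_mem_sphere,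
        Real.norm_eq_abs, Real.norm_eq_abs, abs_of_nonneg ht0,
        abs_of_nonneg (by linarith : (0:ℝ) ≤ 1 - (t:ℝ))] at hnorm
      have ht : (t : ℝ) = 1/2 := by linarith
      rw [ht] at h0
      have hsum : (f x : EuclideanSpace ℝ (Fin (N + 1)))
          + (g x : EuclideanSpace ℝ (Fin (N + 1))) = 0 := by
        have : ((1:ℝ)/2) • ((f x : EuclideanSpace ℝ (Fin (N + 1)))
            + (g x : EuclideanSpace ℝ (Fin (N + 1)))) = 0 := by
          linear_combination (norm := module) h0
        have := smul_eq_zero.mp this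
        rcases this with h' | h'
        · norm_num at h'
        · exact h'
      exact hc x (eq_neg_of_add_eq_zero_right hsum)
    have hVc : Continuous V := by
      apply Continuous.add
      · exact (continuous_const.sub (continuous_subtype_val.comp continuous_fst)).smul
          (continuous_subtype_val.comp (f.continuous.comp continuous_snd))
      · exact (continuous_subtype_val.comp continuous_fst).smul
          (continuous_subtype_val.comp (g.continuous.comp continuous_snd))
    have hmem : ∀ p, ‖V p‖⁻¹ • V p ∈ Sph N := by
      intro p
      rw [mem_sphere_zero_iff_norm, norm_smul, norm_inv, norm_norm]
      exact inv_mul_cancel₀ (norm_ne_zero_iff.mpr (hVne p))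
    refine ⟨⟨⟨fun p => ⟨‖V p‖⁻¹ • V p, hmem p⟩, ?_⟩, ?_, ?_⟩⟩
    · exact Continuous.subtype_mk
        ((hVc.norm.inv₀ (fun p => norm_ne_zero_iff.mpr (hVne p))).smul hVc) _
    · intro x
      ext1
      show ‖V (0, x)‖⁻¹ • V (0, x) = (f x : EuclideanSpace ℝ (Fin (N + 1)))
      have : V (0, x) = (f x : EuclideanSpace ℝ (Fin (N + 1))) := by
        simp [hV]
      rw [this, norm_eq_of_mem_sphere]
      simp
    · intro x
      ext1
      show ‖V (1, x)‖⁻¹ • V (1, x) = (g x : EuclideanSpace ℝ (Fin (N + 1)))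
      have : V (1, x) = (g x : EuclideanSpace ℝ (Fin (N + 1))) := by
        simp [hV]
      rw [this, norm_eq_of_mem_sphere]
      simp
  obtain ⟨x0, hx0⟩ := key
  haveI : Nonempty (Sph N) := ⟨x0⟩
  have hb : ∀ x : Sph N, ‖(f x : EuclideanSpace ℝ (Fin (N + 1)))
      - (g x : EuclideanSpace ℝ (Fin (N + 1)))‖ ≤ 2 := by
    intro x
    calc ‖(f x : EuclideanSpace ℝ (Fin (N + 1)))
        - (g x : EuclideanSpace ℝ (Fin (N + 1)))‖
        ≤ ‖(f x : EuclideanSpace ℝ (Fin (N + 1)))‖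
          + ‖(g x : EuclideanSpace ℝ (Fin (N + 1)))‖ := norm_sub_le _ _
      _ = 2 := by rw [norm_eq_of_mem_sphere, norm_eq_of_mem_sphere]; norm_num
  have h2 : ‖(f x0 : EuclideanSpace ℝ (Fin (N + 1)))
      - (g x0 : EuclideanSpace ℝ (Fin (N + 1)))‖ = 2 := by
    rw [hx0, sub_neg_eq_add, ← two_smul ℝ, norm_smul, norm_eq_of_mem_sphere]
    norm_num
  refine ⟨le_antisymm (ciSup_le hb) ?_, x0, hx0⟩
  calc (2:ℝ) = ‖(f x0 : EuclideanSpace ℝ (Fin (N + 1)))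
      - (g x0 : EuclideanSpace ℝ (Fin (N + 1)))‖ := h2.symm
    _ ≤ _ := le_ciSup ⟨2, Set.forall_mem_range.mpr hb⟩ x0
end

section
/- For any integers d₁ ≠ d₂, and any f ∈ C¹(𝕊¹;𝕊¹) with deg f = d₁ and g ∈ C¹(𝕊¹;𝕊¹) with deg g = d₂, one has ∫_{𝕊¹} |f' - g'| ≥ 4|d₁ - d₂|, where the integral is with respect to arclength and f', g' denote the tangential derivatives. -/
open Real

/-- `φ` is a `C¹` phase function representing the map `e^{iθ} ↦ e^{iφ(θ)}` of `𝕊¹` to itself,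
of degree `d` (equivalently, `deg = (1/2π)∫ f ∧ f'` for `f = e^{iφ}`). -/
def HasC1Degree (φ : ℝ → ℝ) (d : ℤ) : Prop :=
  ContDiff ℝ 1 φ ∧ ∀ θ : ℝ, φ (θ + 2 * π) = φ θ + 2 * π * d



lemma norm_lower (a b x y : ℝ) :
    |(a - b) * Real.cos ((x - y) / 2)| ≤
      ‖Complex.I * a * Complex.exp (Complex.I * x) - Complex.I * b * Complex.exp (Complex.I * y)‖ := by
  have e1 : Complex.exp (Complex.I * x)
      = Complex.exp (Complex.I * ((x + y) / 2 : ℝ)) * Complex.exp ((((x - y) / 2 : ℝ) : ℂ) * Complex.I) := by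
    rw [← Complex.exp_add]; congr 1; push_cast; ring
  have e2 : Complex.exp (Complex.I * y)
      = Complex.exp (Complex.I * ((x + y) / 2 : ℝ)) * Complex.exp (((-((x - y) / 2) : ℝ) : ℂ) * Complex.I) := by
    rw [← Complex.exp_add]; congr 1; push_cast; ring
  have hz : Complex.I * a * Complex.exp (Complex.I * x) - Complex.I * b * Complex.exp (Complex.I * y)
      = (Complex.I * Complex.exp (Complex.I * ((x + y) / 2 : ℝ))) *
        ((a : ℂ) * Complex.exp ((((x - y) / 2 : ℝ) : ℂ) * Complex.I)
          - (b : ℂ) * Complex.exp (((-((x - y) / 2) : ℝ) : ℂ) * Complex.I)) := by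
    rw [e1, e2]; ring
  rw [hz, norm_mul]
  have h1 : ‖Complex.I * Complex.exp (Complex.I * ((x + y) / 2 : ℝ))‖ = 1 := by
    simp [Complex.norm_exp]
  rw [h1, one_mul]
  set w : ℂ := (a : ℂ) * Complex.exp ((((x - y) / 2 : ℝ) : ℂ) * Complex.I)
          - (b : ℂ) * Complex.exp (((-((x - y) / 2) : ℝ) : ℂ) * Complex.I) with hw
  have hre : w.re = (a - b) * Real.cos ((x - y) / 2) := by
    simp only [hw, Complex.sub_re, Complex.mul_re, Complex.exp_ofReal_mul_I_re,
      Complex.exp_ofReal_mul_I_im, Complex.ofReal_re, Complex.ofReal_im,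
      Real.cos_neg, Real.sin_neg]
    ring
  calc |(a - b) * Real.cos ((x - y) / 2)| = |w.re| := by rw [hre]
    _ ≤ ‖w‖ := Complex.abs_re_le_norm w

noncomputable def Gfun (x : ℝ) : ℝ := ∫ t in (0:ℝ)..x, |Real.cos (t / 2)|

lemma cont_integrand : Continuous (fun t : ℝ => |Real.cos (t / 2)|) :=
  (Real.continuous_cos.comp (continuous_id.div_const 2)).abs

lemma integral_cos_half (a b : ℝ) : ∫ t in a..b, Real.cos (t / 2) = 2 * Real.sin (b / 2) - 2 * Real.sin (a / 2) := by
  rw [intervalIntegral.integral_comp_div (fun x => Real.cos x) two_ne_zero, integral_cos]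
  simp [mul_sub]

lemma integral_four : ∫ t in (0:ℝ)..(2 * π), |Real.cos (t / 2)| = 4 := by
  have hsplit : (∫ t in (0:ℝ)..π, |Real.cos (t / 2)|) + ∫ t in π..(2 * π), |Real.cos (t / 2)| =
      ∫ t in (0:ℝ)..(2 * π), |Real.cos (t / 2)| :=
    intervalIntegral.integral_add_adjacent_intervals
      (cont_integrand.intervalIntegrable _ _) (cont_integrand.intervalIntegrable _ _)
  have h1 : (∫ t in (0:ℝ)..π, |Real.cos (t / 2)|) = ∫ t in (0:ℝ)..π, Real.cos (t / 2) := by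
    apply intervalIntegral.integral_congr
    intro t ht
    rw [Set.uIcc_of_le pi_nonneg] at ht
    have h2 : 0 ≤ Real.cos (t / 2) := Real.cos_nonneg_of_mem_Icc
      ⟨by linarith [ht.1, pi_nonneg], by linarith [ht.2]⟩
    exact abs_of_nonneg h2
  have h2 : (∫ t in π..(2 * π), |Real.cos (t / 2)|) = ∫ t in π..(2 * π), -Real.cos (t / 2) := by
    apply intervalIntegral.integral_congr
    intro t ht
    rw [Set.uIcc_of_le (by linarith [pi_nonneg])] at ht
    have h3 : Real.cos (t / 2) ≤ 0 := by
      apply Real.cos_nonpos_of_pi_div_two_le_of_le (by linarith [ht.1])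
      linarith [ht.2, pi_nonneg]
    show |Real.cos (t / 2)| = -Real.cos (t / 2)
    rw [abs_of_nonpos h3]
  rw [← hsplit, h1, h2, intervalIntegral.integral_neg, integral_cos_half, integral_cos_half]
  have : (2 * π) / 2 = π := by ring
  rw [this]
  simp [Real.sin_pi_div_two]
  norm_num

lemma G_add_period (x : ℝ) : Gfun (x + 2 * π) = Gfun x + 4 := by
  have hper : Function.Periodic (fun t : ℝ => |Real.cos (t / 2)|) (2 * π) := by
    intro t
    simp only
    rw [show (t + 2 * π) / 2 = t / 2 + π by ring, Real.cos_add_pi, abs_neg]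
  have h1 : Gfun x + ∫ t in x..(x + 2 * π), |Real.cos (t / 2)| = Gfun (x + 2 * π) :=
    intervalIntegral.integral_add_adjacent_intervals
      (cont_integrand.intervalIntegrable _ _) (cont_integrand.intervalIntegrable _ _)
  rw [← h1, hper.intervalIntegral_add_eq x 0, zero_add, integral_four]

lemma G_add_int (x : ℝ) (k : ℤ) : Gfun (x + 2 * π * k) = Gfun x + 4 * k := by
  induction k using Int.induction_on with
  | zero => simp
  | succ n ih =>
      have : x + 2 * π * ((n : ℤ) + 1 : ℤ) = (x + 2 * π * (n : ℤ)) + 2 * π := by push_cast; ring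
      rw [this, G_add_period, ih]; push_cast; ring
  | pred n ih =>
      have heq : x + 2 * π * (-(n : ℤ) - 1 : ℤ) + 2 * π = x + 2 * π * (-(n : ℤ) : ℤ) := by push_cast; ring
      have h2 := G_add_period (x + 2 * π * (-(n : ℤ) - 1 : ℤ))
      rw [heq, ih] at h2
      push_cast at h2 ⊢
      linarith


lemma deriv_exp_phase (φ : ℝ → ℝ) (hφ : ContDiff ℝ 1 φ) (θ : ℝ) :
    deriv (fun t : ℝ => Complex.exp (Complex.I * (φ t : ℂ))) θ
      = Complex.I * (deriv φ θ) * Complex.exp (Complex.I * (φ θ : ℂ)) := by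
  have d1 : HasDerivAt φ (deriv φ θ) θ := (hφ.differentiable one_ne_zero θ).hasDerivAt
  have h1 : HasDerivAt (fun t : ℝ => Complex.I * (φ t : ℂ)) (Complex.I * (deriv φ θ)) θ := by
    simpa using (d1.ofReal_comp.const_mul Complex.I)
  have h2 := h1.cexp
  rw [h2.deriv]; ring

/-- For integers `d₁ ≠ d₂` and `C¹` maps `f = e^{iφ}, g = e^{iψ} : 𝕊¹ → 𝕊¹` of degrees
`d₁, d₂`, one has `∫_{𝕊¹} |f' - g'| ≥ 4 |d₁ - d₂|`. -/
theorem stmt2 (d₁ d₂ : ℤ) (hne : d₁ ≠ d₂) (φ ψ : ℝ → ℝ)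
    (hφ : HasC1Degree φ d₁) (hψ : HasC1Degree ψ d₂) :
    4 * |(d₁ : ℝ) - (d₂ : ℝ)| ≤
      ∫ θ in (0:ℝ)..(2 * π),
        ‖deriv (fun t : ℝ => Complex.exp (Complex.I * (φ t : ℂ))) θ -
          deriv (fun t : ℝ => Complex.exp (Complex.I * (ψ t : ℂ))) θ‖ := by
  obtain ⟨hφ1, hφ2⟩ := hφ
  obtain ⟨hψ1, hψ2⟩ := hψ
  set k : ℤ := d₁ - d₂ with hk
  have hk0 : k ≠ 0 := sub_ne_zero.mpr hne
  set ε : ℝ := if 0 < k then 1 else -1 with hε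
  set h : ℝ → ℝ := fun θ => φ θ - ψ θ with hh
  set h' : ℝ → ℝ := fun θ => deriv φ θ - deriv ψ θ with hh'
  have dh : ∀ θ, HasDerivAt h (h' θ) θ := fun θ =>
    ((hφ1.differentiable one_ne_zero θ).hasDerivAt).sub ((hψ1.differentiable one_ne_zero θ).hasDerivAt)
  have hcontφ' : Continuous (deriv φ) := hφ1.continuous_deriv le_rfl
  have hcontψ' : Continuous (deriv ψ) := hψ1.continuous_deriv le_rfl
  have hcont' : Continuous h' := hcontφ'.sub hcontψ'
  have hconth : Continuous h := hφ1.continuous.sub hψ1.continuous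
  -- pointwise bound
  have hptwise : ∀ θ : ℝ, ε * (h' θ * |Real.cos (h θ / 2)|)
      ≤ ‖deriv (fun t : ℝ => Complex.exp (Complex.I * (φ t : ℂ))) θ -
          deriv (fun t : ℝ => Complex.exp (Complex.I * (ψ t : ℂ))) θ‖ := by
    intro θ
    rw [deriv_exp_phase φ hφ1 θ, deriv_exp_phase ψ hψ1 θ]
    have hb := norm_lower (deriv φ θ) (deriv ψ θ) (φ θ) (ψ θ)
    refine le_trans ?_ hb
    have hε1 : ε * h' θ ≤ |h' θ| := by
      rcases abs_cases (h' θ) with ⟨he, _⟩ | ⟨he, _⟩ <;> rcases ite_eq_or_eq (0 < k) (1:ℝ) (-1) with h9 | h9 <;>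
        rw [hε, h9] <;> nlinarith [abs_nonneg (h' θ)]
    calc ε * (h' θ * |Real.cos (h θ / 2)|) = (ε * h' θ) * |Real.cos (h θ / 2)| := by ring
      _ ≤ |h' θ| * |Real.cos (h θ / 2)| :=
          mul_le_mul_of_nonneg_right hε1 (abs_nonneg _)
      _ = |h' θ * Real.cos (h θ / 2)| := (abs_mul _ _).symm
      _ = |(deriv φ θ - deriv ψ θ) * Real.cos ((φ θ - ψ θ) / 2)| := rfl
  -- substitution
  have hsub : ∫ θ in (0:ℝ)..(2 * π), h' θ • ((fun u => |Real.cos (u / 2)|) ∘ h) θ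
      = ∫ u in (h 0)..(h (2 * π)), |Real.cos (u / 2)| :=
    intervalIntegral.integral_comp_smul_deriv (fun x _ => dh x) hcont'.continuousOn cont_integrand
  have hGdiff : ∫ u in (h 0)..(h (2 * π)), |Real.cos (u / 2)| = Gfun (h (2 * π)) - Gfun (h 0) := by
    rw [Gfun, Gfun, ← intervalIntegral.integral_interval_sub_left
      (cont_integrand.intervalIntegrable _ _) (cont_integrand.intervalIntegrable _ _)]
  have hh2π : h (2 * π) = h 0 + 2 * π * k := by
    have e1 := hφ2 0
    have e2 := hψ2 0
    simp only [zero_add] at e1 e2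
    simp only [hh, e1, e2, hk]
    push_cast; ring
  have hGval : Gfun (h (2 * π)) - Gfun (h 0) = 4 * (k : ℝ) := by
    rw [hh2π, G_add_int]; ring
  have hεk : ε * (4 * (k : ℝ)) = 4 * |(d₁ : ℝ) - (d₂ : ℝ)| := by
    have : |(d₁ : ℝ) - (d₂ : ℝ)| = |(k : ℝ)| := by rw [hk]; push_cast; ring_nf
    rw [this, hε]
    rcases lt_trichotomy k 0 with hlt | heq | hgt
    · rw [if_neg (by omega), abs_of_neg (by exact_mod_cast hlt)]; ring
    · exact absurd heq hk0
    · rw [if_pos hgt, abs_of_pos (by exact_mod_cast hgt)]; ring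
  -- integrability of both sides
  have hcontL : Continuous (fun θ => ε * (h' θ * |Real.cos (h θ / 2)|)) := by
    exact continuous_const.mul (hcont'.mul (cont_integrand.comp hconth))
  have hcontR : Continuous (fun θ : ℝ =>
      ‖deriv (fun t : ℝ => Complex.exp (Complex.I * (φ t : ℂ))) θ -
        deriv (fun t : ℝ => Complex.exp (Complex.I * (ψ t : ℂ))) θ‖) := by
    have e1 : (fun θ : ℝ => deriv (fun t : ℝ => Complex.exp (Complex.I * (φ t : ℂ))) θ)
        = fun θ => Complex.I * (deriv φ θ) * Complex.exp (Complex.I * (φ θ : ℂ)) :=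
      funext (deriv_exp_phase φ hφ1)
    have e2 : (fun θ : ℝ => deriv (fun t : ℝ => Complex.exp (Complex.I * (ψ t : ℂ))) θ)
        = fun θ => Complex.I * (deriv ψ θ) * Complex.exp (Complex.I * (ψ θ : ℂ)) :=
      funext (deriv_exp_phase ψ hψ1)
    simp only [e1, e2]
    have c1 : Continuous (fun θ : ℝ => Complex.I * ((deriv φ θ : ℝ) : ℂ) * Complex.exp (Complex.I * (φ θ : ℂ))) :=
      (continuous_const.mul (Complex.continuous_ofReal.comp hcontφ')).mul
        (Complex.continuous_exp.comp (continuous_const.mul (Complex.continuous_ofReal.comp hφ1.continuous)))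
    have c2 : Continuous (fun θ : ℝ => Complex.I * ((deriv ψ θ : ℝ) : ℂ) * Complex.exp (Complex.I * (ψ θ : ℂ))) :=
      (continuous_const.mul (Complex.continuous_ofReal.comp hcontψ')).mul
        (Complex.continuous_exp.comp (continuous_const.mul (Complex.continuous_ofReal.comp hψ1.continuous)))
    exact (c1.sub c2).norm
  calc 4 * |(d₁ : ℝ) - (d₂ : ℝ)| = ε * ∫ θ in (0:ℝ)..(2 * π), h' θ • ((fun u => |Real.cos (u / 2)|) ∘ h) θ := by
        rw [hsub, hGdiff, hGval, hεk]
    _ = ∫ θ in (0:ℝ)..(2 * π), ε * (h' θ * |Real.cos (h θ / 2)|) := by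
        rw [← intervalIntegral.integral_const_mul]
        apply intervalIntegral.integral_congr
        intro t _
        simp [smul_eq_mul, Function.comp]
    _ ≤ ∫ θ in (0:ℝ)..(2 * π),
        ‖deriv (fun t : ℝ => Complex.exp (Complex.I * (φ t : ℂ))) θ -
          deriv (fun t : ℝ => Complex.exp (Complex.I * (ψ t : ℂ))) θ‖ := by
        apply intervalIntegral.integral_mono_on (by positivity)
          (hcontL.intervalIntegrable _ _) (hcontR.intervalIntegrable _ _)
        intro θ _
        exact hptwise θ
end

section
/- For every integers d₁ ≠ d₂ and every ε > 0 there exist C¹ maps f, g : 𝕊¹ → 𝕊¹ with deg f = d₁, deg g = d₂, and ∫_{𝕊¹}|f' - g'| ≤ 4|d₁ - d₂| + ε. Consequently the infimum of ∫_{𝕊¹}|f'-g'| over all such pairs equals 4|d₁-d₂|. -/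
open Real

/-- The `W^{1,1}` distance `∫_{𝕊¹}|f' - g'|` between `f = e^{iφ}` and `g = e^{iψ}`. -/
noncomputable def dW11 (φ ψ : ℝ → ℝ) : ℝ :=
  ∫ θ in (0:ℝ)..(2 * π),
    ‖deriv (fun t : ℝ => Complex.exp (Complex.I * (φ t : ℂ))) θ -
      deriv (fun t : ℝ => Complex.exp (Complex.I * (ψ t : ℂ))) θ‖

namespace Stmt3Aux

open MeasureTheory intervalIntegral


open MeasureTheory intervalIntegral

noncomputable def g0 (s : ℝ) : ℝ := |Real.cos (s / 2)|

lemma g0_cont : Continuous g0 := (Real.continuous_cos.comp (continuous_id.div_const 2)).abs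

lemma g0_nonneg (s : ℝ) : 0 ≤ g0 s := abs_nonneg _

lemma g0_periodic : Function.Periodic g0 (2 * π) := by
  intro s; unfold g0
  have h : (s + 2 * π) / 2 = s / 2 + π := by ring
  rw [h, Real.cos_add_pi, abs_neg]

lemma cos_half_int (a b : ℝ) : ∫ s in a..b, Real.cos (s / 2) =
    2 * Real.sin (b / 2) - 2 * Real.sin (a / 2) := by
  have h : ∀ x ∈ Set.uIcc a b, HasDerivAt (fun s : ℝ => 2 * Real.sin (s / 2))
      (Real.cos (x / 2)) x := by
    intro x _
    have h1 : HasDerivAt (fun s : ℝ => s / 2) (1 / 2) x := (hasDerivAt_id x).div_const 2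
    have h2 := (Real.hasDerivAt_sin (x / 2)).comp x h1
    have h3 := h2.const_mul (2:ℝ)
    exact h3.congr_deriv (by ring)
  rw [intervalIntegral.integral_eq_sub_of_hasDerivAt h
    ((Real.continuous_cos.comp (continuous_id.div_const 2)).continuousOn.intervalIntegrable)]

lemma g0_int_one : ∫ s in (0:ℝ)..(2 * π), g0 s = 4 := by
  have hsplit : ∫ s in (0:ℝ)..(2*π), g0 s = (∫ s in (0:ℝ)..π, g0 s) + ∫ s in π..(2*π), g0 s :=
    (intervalIntegral.integral_add_adjacent_intervals
      (g0_cont.intervalIntegrable _ _) (g0_cont.intervalIntegrable _ _)).symm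
  have h1 : ∫ s in (0:ℝ)..π, g0 s = ∫ s in (0:ℝ)..π, Real.cos (s / 2) := by
    apply intervalIntegral.integral_congr
    intro s hs
    rw [Set.uIcc_of_le Real.pi_nonneg] at hs
    exact abs_of_nonneg (Real.cos_nonneg_of_mem_Icc
      ⟨by linarith [hs.1, Real.pi_pos], by linarith [hs.2]⟩)
  have h2 : ∫ s in π..(2*π), g0 s = ∫ s in π..(2*π), -Real.cos (s / 2) := by
    apply intervalIntegral.integral_congr
    intro s hs
    rw [Set.uIcc_of_le (by linarith [Real.pi_pos] : π ≤ 2*π)] at hs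
    refine abs_of_nonpos (Real.cos_nonpos_of_pi_div_two_le_of_le (by linarith [hs.1]) ?_)
    linarith [hs.2, Real.pi_pos]
  rw [hsplit, h1, h2, intervalIntegral.integral_neg, cos_half_int, cos_half_int]
  have e1 : (2:ℝ) * π / 2 = π := by ring
  rw [e1]
  simp [Real.sin_pi_div_two]
  norm_num

lemma g0_int_zsmul (n : ℤ) (c : ℝ) : ∫ s in c..(c + 2 * π * n), g0 s = 4 * n := by
  have h := g0_periodic.intervalIntegral_add_zsmul_eq n c
    (fun t₁ t₂ => g0_cont.intervalIntegrable _ _)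
  have e : c + n • (2 * π) = c + 2 * π * n := by push_cast [zsmul_eq_mul]; ring
  rw [e] at h
  rw [h, g0_periodic.intervalIntegral_add_eq c 0, zero_add, g0_int_one, zsmul_eq_mul]
  ring

/-! ### Pointwise norm computations -/

lemma norm_sq_formula (a b p q : ℝ) :
    ‖Complex.exp (Complex.I * p) * (Complex.I * a) -
      Complex.exp (Complex.I * q) * (Complex.I * b)‖ ^ 2
      = a ^ 2 + b ^ 2 - 2 * a * b * Real.cos (p - q) := by
  rw [mul_comm Complex.I (p:ℂ), mul_comm Complex.I (q:ℂ)]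
  rw [Complex.sq_norm, Complex.normSq_apply]
  simp [Complex.mul_re, Complex.mul_im, Complex.exp_ofReal_mul_I_re,
    Complex.exp_ofReal_mul_I_im, Real.cos_sub]
  linear_combination a ^ 2 * Real.sin_sq_add_cos_sq p + b ^ 2 * Real.sin_sq_add_cos_sq q

lemma cos_half_identity (x : ℝ) : Real.cos x = 2 * Real.cos (x / 2) ^ 2 - 1 := by
  have h := Real.cos_two_mul (x / 2)
  rw [show 2 * (x / 2) = x by ring] at h
  linarith

lemma norm_ge (a b p q : ℝ) :
    |(a - b) * Real.cos ((p - q) / 2)| ≤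
      ‖Complex.exp (Complex.I * p) * (Complex.I * a) -
        Complex.exp (Complex.I * q) * (Complex.I * b)‖ := by
  have h2 := norm_sq_formula a b p q
  have hc := cos_half_identity (p - q)
  have hs := Real.sin_sq_add_cos_sq ((p - q) / 2)
  have hsq : ((a - b) * Real.cos ((p - q) / 2)) ^ 2 ≤
      ‖Complex.exp (Complex.I * p) * (Complex.I * a) -
        Complex.exp (Complex.I * q) * (Complex.I * b)‖ ^ 2 := by
    rw [h2, hc]
    nlinarith [sq_nonneg ((a + b) * Real.sin ((p - q) / 2)), hs, sq_nonneg (a + b),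
      mul_self_nonneg ((a + b) * Real.sin ((p - q) / 2))]
  calc |(a - b) * Real.cos ((p - q) / 2)|
      = Real.sqrt (((a - b) * Real.cos ((p - q) / 2)) ^ 2) := (Real.sqrt_sq_eq_abs _).symm
    _ ≤ Real.sqrt (‖_‖ ^ 2) := Real.sqrt_le_sqrt hsq
    _ = _ := Real.sqrt_sq (norm_nonneg _)

lemma norm_eq (a b p q : ℝ) (h0 : (a + b) * Real.sin ((p - q) / 2) = 0) :
    ‖Complex.exp (Complex.I * p) * (Complex.I * a) -
      Complex.exp (Complex.I * q) * (Complex.I * b)‖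
      = |(a - b) * Real.cos ((p - q) / 2)| := by
  have h2 := norm_sq_formula a b p q
  have hc := cos_half_identity (p - q)
  have hs := Real.sin_sq_add_cos_sq ((p - q) / 2)
  have hsq : ‖Complex.exp (Complex.I * p) * (Complex.I * a) -
        Complex.exp (Complex.I * q) * (Complex.I * b)‖ ^ 2
      = ((a - b) * Real.cos ((p - q) / 2)) ^ 2 := by
    rw [h2, hc]
    have h0' : ((a + b) * Real.sin ((p - q) / 2)) ^ 2 = 0 := by rw [h0]; ring
    linear_combination h0' - (a + b) ^ 2 * hs
  calc ‖_‖ = Real.sqrt (‖Complex.exp (Complex.I * p) * (Complex.I * a) -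
        Complex.exp (Complex.I * q) * (Complex.I * b)‖ ^ 2) := (Real.sqrt_sq (norm_nonneg _)).symm
    _ = Real.sqrt (((a - b) * Real.cos ((p - q) / 2)) ^ 2) := by rw [hsq]
    _ = _ := Real.sqrt_sq_eq_abs _

/-! ### Derivatives of `e^{iφ}` -/

lemma hasDerivAt_cexp_phase {φ : ℝ → ℝ} {a : ℝ} {θ : ℝ} (h : HasDerivAt φ a θ) :
    HasDerivAt (fun t : ℝ => Complex.exp (Complex.I * (φ t : ℂ)))
      (Complex.exp (Complex.I * (φ θ : ℂ)) * (Complex.I * a)) θ := by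
  have h1 : HasDerivAt (fun t : ℝ => Complex.I * (φ t : ℂ)) ((a : ℂ) * Complex.I) θ := by
    have := (h.ofReal_comp).const_mul Complex.I
    exact this.congr_deriv (by ring)
  have := h1.cexp
  convert this using 1
  ring

lemma deriv_cexp_phase {φ : ℝ → ℝ} (hφ : ContDiff ℝ 1 φ) (θ : ℝ) :
    deriv (fun t : ℝ => Complex.exp (Complex.I * (φ t : ℂ))) θ
      = Complex.exp (Complex.I * (φ θ : ℂ)) * (Complex.I * Complex.ofReal (deriv φ θ)) :=
  (hasDerivAt_cexp_phase (((hφ.differentiable one_ne_zero) θ).hasDerivAt)).deriv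

/-! ### Primitive construction -/

noncomputable def F (k : ℝ → ℝ) (θ : ℝ) : ℝ := ∫ t in (0:ℝ)..θ, k t

lemma F_hasDerivAt {k : ℝ → ℝ} (hk : Continuous k) (θ : ℝ) :
    HasDerivAt (F k) (k θ) θ :=
  intervalIntegral.integral_hasDerivAt_right (hk.intervalIntegrable 0 θ)
    hk.aestronglyMeasurable.stronglyMeasurableAtFilter hk.continuousAt

lemma F_deriv {k : ℝ → ℝ} (hk : Continuous k) : deriv (F k) = k :=
  funext fun θ => (F_hasDerivAt hk θ).deriv

lemma F_contDiff {k : ℝ → ℝ} (hk : Continuous k) : ContDiff ℝ 1 (F k) := by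
  rw [contDiff_one_iff_deriv]
  exact ⟨fun θ => (F_hasDerivAt hk θ).differentiableAt, by rw [F_deriv hk]; exact hk⟩

lemma F_periodic {k : ℝ → ℝ} (hk : Continuous k) (hper : Function.Periodic k (2 * π))
    (θ : ℝ) : F k (θ + 2 * π) = F k θ + ∫ t in (0:ℝ)..(2 * π), k t := by
  have h1 : F k (θ + 2 * π) = F k θ + ∫ t in θ..(θ + 2 * π), k t :=
    (intervalIntegral.integral_add_adjacent_intervals
      (hk.intervalIntegrable _ _) (hk.intervalIntegrable _ _)).symm
  have h2 : ∫ t in θ..(θ + 2 * π), k t = ∫ t in (0:ℝ)..(0 + 2 * π), k t :=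
    hper.intervalIntegral_add_eq θ 0
  rw [h1, h2, zero_add]

/-! ### The bump profiles -/

noncomputable def P (t : ℝ) : ℝ := max (Real.sin t) 0
noncomputable def Q (t : ℝ) : ℝ := max (-Real.sin t) 0

lemma P_cont : Continuous P := Real.continuous_sin.max continuous_const
lemma Q_cont : Continuous Q := Real.continuous_sin.neg.max continuous_const
lemma P_periodic : Function.Periodic P (2 * π) := fun t => by unfold P; rw [Real.sin_add_two_pi]
lemma Q_periodic : Function.Periodic Q (2 * π) := fun t => by unfold Q; rw [Real.sin_add_two_pi]
lemma P_nonneg (t : ℝ) : 0 ≤ P t := le_max_right _ _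

lemma sin_nonpos_of_mem (t : ℝ) (h1 : π ≤ t) (h2 : t ≤ 2 * π) : Real.sin t ≤ 0 := by
  have h : Real.sin (t - π) = -Real.sin t := Real.sin_sub_pi t
  have h3 : 0 ≤ Real.sin (t - π) := Real.sin_nonneg_of_nonneg_of_le_pi (by linarith) (by linarith)
  linarith

lemma Q_eq_zero (t : ℝ) (h0 : 0 ≤ t) (h1 : t ≤ π) : Q t = 0 :=
  max_eq_right (neg_nonpos.2 (Real.sin_nonneg_of_nonneg_of_le_pi h0 h1))

lemma P_int_pi (θ : ℝ) (h0 : 0 ≤ θ) (hθ : θ ≤ π) : ∫ t in (0:ℝ)..θ, P t = 1 - Real.cos θ := by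
  have h : ∫ t in (0:ℝ)..θ, P t = ∫ t in (0:ℝ)..θ, Real.sin t := by
    apply intervalIntegral.integral_congr
    intro t ht
    rw [Set.uIcc_of_le h0] at ht
    exact max_eq_left (Real.sin_nonneg_of_nonneg_of_le_pi ht.1 (le_trans ht.2 hθ))
  rw [h, integral_sin, Real.cos_zero]

lemma P_int_two_pi (θ : ℝ) (h0 : π ≤ θ) (hθ : θ ≤ 2 * π) : ∫ t in (0:ℝ)..θ, P t = 2 := by
  have hsplit : ∫ t in (0:ℝ)..θ, P t = (∫ t in (0:ℝ)..π, P t) + ∫ t in π..θ, P t :=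
    (intervalIntegral.integral_add_adjacent_intervals
      (P_cont.intervalIntegrable _ _) (P_cont.intervalIntegrable _ _)).symm
  have h2 : ∫ t in π..θ, P t = 0 := by
    have h : ∫ t in π..θ, P t = ∫ t in π..θ, (0:ℝ) := by
      apply intervalIntegral.integral_congr
      intro t ht
      rw [Set.uIcc_of_le h0] at ht
      exact max_eq_right (sin_nonpos_of_mem t ht.1 (le_trans ht.2 hθ))
    rw [h, intervalIntegral.integral_zero]
  rw [hsplit, h2, P_int_pi π Real.pi_nonneg le_rfl, Real.cos_pi]; ring

lemma Q_int_two_pi : ∫ t in (0:ℝ)..(2*π), Q t = 2 := by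
  have hsplit : ∫ t in (0:ℝ)..(2*π), Q t = (∫ t in (0:ℝ)..π, Q t) + ∫ t in π..(2*π), Q t :=
    (intervalIntegral.integral_add_adjacent_intervals
      (Q_cont.intervalIntegrable _ _) (Q_cont.intervalIntegrable _ _)).symm
  have h1 : ∫ t in (0:ℝ)..π, Q t = 0 := by
    have h : ∫ t in (0:ℝ)..π, Q t = ∫ t in (0:ℝ)..π, (0:ℝ) := by
      apply intervalIntegral.integral_congr
      intro t ht
      rw [Set.uIcc_of_le Real.pi_nonneg] at ht
      exact Q_eq_zero t ht.1 ht.2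
    rw [h, intervalIntegral.integral_zero]
  have h2 : ∫ t in π..(2*π), Q t = 2 := by
    have he : ∫ t in π..(2*π), Q t = ∫ t in π..(2*π), -Real.sin t := by
      apply intervalIntegral.integral_congr
      intro t ht
      rw [Set.uIcc_of_le (by linarith [Real.pi_pos] : π ≤ 2*π)] at ht
      exact max_eq_left (by linarith [sin_nonpos_of_mem t ht.1 ht.2])
    rw [he, intervalIntegral.integral_neg, integral_sin, Real.cos_pi, Real.cos_two_pi]; ring
  rw [hsplit, h1, h2]; ring

lemma P_int_two_pi' : ∫ t in (0:ℝ)..(2*π), P t = 2 :=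
  P_int_two_pi (2*π) (by linarith [Real.pi_pos]) le_rfl


lemma stmt3_lower (d₁ d₂ : ℤ) (φ ψ : ℝ → ℝ) (h1 : HasC1Degree φ d₁) (h2 : HasC1Degree ψ d₂) :
    4 * |(d₁:ℝ) - (d₂:ℝ)| ≤ dW11 φ ψ := by
  obtain ⟨hφ, hpφ⟩ := h1
  obtain ⟨hψ, hpψ⟩ := h2
  have hu : ContDiff ℝ 1 (fun θ => φ θ - ψ θ) := hφ.sub hψ
  have hdφc : Continuous (deriv φ) := (contDiff_one_iff_deriv.mp hφ).2
  have hdψc : Continuous (deriv ψ) := (contDiff_one_iff_deriv.mp hψ).2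
  have hduc : Continuous (deriv (fun θ => φ θ - ψ θ)) := (contDiff_one_iff_deriv.mp hu).2
  have hderiv_u : ∀ θ, deriv (fun θ => φ θ - ψ θ) θ = deriv φ θ - deriv ψ θ := fun θ =>
    deriv_fun_sub ((hφ.differentiable one_ne_zero) θ) ((hψ.differentiable one_ne_zero) θ)
  have hφc : Continuous φ := hφ.continuous
  have hψc : Continuous ψ := hψ.continuous
  have h2pi : (0:ℝ) ≤ 2 * π := by positivity
  set Fc : ℝ → ℂ := fun θ => Complex.exp (Complex.I * (φ θ:ℂ)) * (Complex.I * Complex.ofReal (deriv φ θ))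
    - Complex.exp (Complex.I * (ψ θ:ℂ)) * (Complex.I * Complex.ofReal (deriv ψ θ)) with hFc
  have hFcc : Continuous Fc := by
    apply Continuous.sub
    · exact (Complex.continuous_exp.comp (continuous_const.mul
        (Complex.continuous_ofReal.comp hφc))).mul
        (continuous_const.mul (Complex.continuous_ofReal.comp hdφc))
    · exact (Complex.continuous_exp.comp (continuous_const.mul
        (Complex.continuous_ofReal.comp hψc))).mul
        (continuous_const.mul (Complex.continuous_ofReal.comp hdψc))
  have hI : dW11 φ ψ = ∫ θ in (0:ℝ)..(2*π), ‖Fc θ‖ := by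
    unfold dW11
    apply intervalIntegral.integral_congr
    intro θ _
    simp only [hFc]
    rw [deriv_cexp_phase hφ θ, deriv_cexp_phase hψ θ]
  set h : ℝ → ℝ := fun θ => deriv (fun θ => φ θ - ψ θ) θ * g0 (φ θ - ψ θ) with hh
  have hhc : Continuous h := hduc.mul (g0_cont.comp (hφc.sub hψc))
  have hpoint : ∀ θ ∈ Set.Icc (0:ℝ) (2*π), |h θ| ≤ ‖Fc θ‖ := by
    intro θ _
    have e1 : |h θ| = |(deriv φ θ - deriv ψ θ) * Real.cos ((φ θ - ψ θ) / 2)| := by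
      rw [hh]
      simp only
      rw [hderiv_u θ, abs_mul, abs_mul]
      unfold g0
      rw [abs_abs]
    rw [e1]
    exact norm_ge _ _ _ _
  have step1 : |∫ θ in (0:ℝ)..(2*π), h θ| ≤ ∫ θ in (0:ℝ)..(2*π), |h θ| :=
    intervalIntegral.abs_integral_le_integral_abs h2pi
  have step2 : (∫ θ in (0:ℝ)..(2*π), |h θ|) ≤ ∫ θ in (0:ℝ)..(2*π), ‖Fc θ‖ :=
    intervalIntegral.integral_mono_on h2pi (hhc.abs.intervalIntegrable _ _)
      (hFcc.norm.intervalIntegrable _ _) hpoint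
  have step3 : (∫ θ in (0:ℝ)..(2*π), h θ)
      = ∫ s in (φ 0 - ψ 0)..(φ (2*π) - ψ (2*π)), g0 s := by
    have hs := intervalIntegral.integral_comp_smul_deriv (a := (0:ℝ)) (b := 2*π)
      (f := fun θ => φ θ - ψ θ) (f' := deriv (fun θ => φ θ - ψ θ)) (g := g0)
      (fun x _ => ((hu.differentiable one_ne_zero) x).hasDerivAt) hduc.continuousOn g0_cont
    simpa [smul_eq_mul, Function.comp] using hs
  have hu2π : φ (2*π) - ψ (2*π) = (φ 0 - ψ 0) + 2*π*((d₁:ℝ) - (d₂:ℝ)) := by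
    have e0 : (2*π:ℝ) = 0 + 2*π := by ring
    rw [e0, hpφ 0, hpψ 0]
    ring
  have step4 : (∫ s in (φ 0 - ψ 0)..(φ (2*π) - ψ (2*π)), g0 s) = 4 * ((d₁:ℝ) - (d₂:ℝ)) := by
    rw [hu2π]
    have hz := g0_int_zsmul (d₁ - d₂) (φ 0 - ψ 0)
    push_cast at hz
    exact hz
  have final : 4 * |(d₁:ℝ) - (d₂:ℝ)| = |∫ θ in (0:ℝ)..(2*π), h θ| := by
    rw [step3, step4, abs_mul]
    norm_num
  rw [final, hI]
  exact le_trans step1 step2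


lemma stmt3_construct (d₁ d₂ : ℤ) :
    ∃ φ ψ : ℝ → ℝ, HasC1Degree φ d₁ ∧ HasC1Degree ψ d₂ ∧
      dW11 φ ψ = 4 * |(d₁ : ℝ) - (d₂ : ℝ)| := by
  set Dr : ℝ := (d₁ : ℝ) - (d₂ : ℝ) with hDr
  set Sr : ℝ := (d₁ : ℝ) + (d₂ : ℝ) with hSr
  set kφ : ℝ → ℝ := fun t => π * Dr / 2 * P t + π * Sr / 2 * Q t with hkφ
  set kψ : ℝ → ℝ := fun t => -(π * Dr / 2) * P t + π * Sr / 2 * Q t with hkψ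
  have hkφc : Continuous kφ := (continuous_const.mul P_cont).add (continuous_const.mul Q_cont)
  have hkψc : Continuous kψ := (continuous_const.mul P_cont).add (continuous_const.mul Q_cont)
  have hkφper : Function.Periodic kφ (2 * π) := fun t => by
    simp only [hkφ, P_periodic t, Q_periodic t]
  have hkψper : Function.Periodic kψ (2 * π) := fun t => by
    simp only [hkψ, P_periodic t, Q_periodic t]
  have hintφ : ∫ t in (0:ℝ)..(2*π), kφ t = 2 * π * (d₁:ℝ) := by
    simp only [hkφ]
    rw [intervalIntegral.integral_add (f := fun t => π * Dr / 2 * P t) (g := fun t => π * Sr / 2 * Q t) ((continuous_const.mul P_cont).intervalIntegrable _ _)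
      ((continuous_const.mul Q_cont).intervalIntegrable _ _),
      intervalIntegral.integral_const_mul, intervalIntegral.integral_const_mul,
      P_int_two_pi', Q_int_two_pi, hDr, hSr]
    ring
  have hintψ : ∫ t in (0:ℝ)..(2*π), kψ t = 2 * π * (d₂:ℝ) := by
    simp only [hkψ]
    rw [intervalIntegral.integral_add (f := fun t => -(π * Dr / 2) * P t) (g := fun t => π * Sr / 2 * Q t) ((continuous_const.mul P_cont).intervalIntegrable _ _)
      ((continuous_const.mul Q_cont).intervalIntegrable _ _),
      intervalIntegral.integral_const_mul, intervalIntegral.integral_const_mul,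
      P_int_two_pi', Q_int_two_pi, hDr, hSr]
    ring
  refine ⟨F kφ, F kψ, ⟨F_contDiff hkφc, fun θ => by rw [F_periodic hkφc hkφper θ, hintφ]⟩,
    ⟨F_contDiff hkψc, fun θ => by rw [F_periodic hkψc hkψper θ, hintψ]⟩, ?_⟩
  -- difference of phases
  have hdiff : ∀ θ, F kφ θ - F kψ θ = π * Dr * F P θ := by
    intro θ
    unfold F
    rw [← intervalIntegral.integral_sub (hkφc.intervalIntegrable _ _)
      (hkψc.intervalIntegrable _ _), ← intervalIntegral.integral_const_mul]
    apply intervalIntegral.integral_congr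
    intro t _
    simp only [hkφ, hkψ]
    ring
  -- step A : rewrite the integrand using norm_eq
  have hA : dW11 (F kφ) (F kψ) =
      ∫ θ in (0:ℝ)..(2*π), |(kφ θ - kψ θ) * Real.cos ((F kφ θ - F kψ θ) / 2)| := by
    unfold dW11
    apply intervalIntegral.integral_congr
    intro θ hθ
    rw [Set.uIcc_of_le (by positivity) ] at hθ
    simp only
    rw [deriv_cexp_phase (F_contDiff hkφc) θ, deriv_cexp_phase (F_contDiff hkψc) θ,
      F_deriv hkφc, F_deriv hkψc]
    apply norm_eq
    have hsum : kφ θ + kψ θ = π * Sr * Q θ := by simp only [hkφ, hkψ]; ring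
    rw [hsum]
    rcases le_total θ π with hle | hge
    · rw [Q_eq_zero θ hθ.1 hle]; ring
    · have hFP : F P θ = 2 := P_int_two_pi θ hge hθ.2
      rw [hdiff θ, hFP]
      have : π * Dr * 2 / 2 = ((d₁ - d₂ : ℤ) : ℝ) * π := by push_cast [hDr]; ring
      rw [this, Real.sin_int_mul_pi]
      ring
  -- step B : switch to |Dr| form
  set n : ℝ := |Dr| with hn
  have hB : dW11 (F kφ) (F kψ) =
      ∫ θ in (0:ℝ)..(2*π), (π * n * P θ) • g0 (π * n * F P θ) := by
    rw [hA]
    apply intervalIntegral.integral_congr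
    intro θ _
    have hsub : kφ θ - kψ θ = π * Dr * P θ := by simp only [hkφ, hkψ]; ring
    simp only
    rw [hsub, hdiff θ]
    have habs1 : |π * Dr * P θ| = π * n * P θ := by
      rw [abs_mul, abs_mul, abs_of_nonneg Real.pi_pos.le, abs_of_nonneg (P_nonneg θ), hn]
    have hcos : |Real.cos (π * Dr * F P θ / 2)| = g0 (π * n * F P θ) := by
      have heq : |Real.cos (π * Dr * F P θ / 2)| = |Real.cos (π * n * F P θ / 2)| := by
        rcases abs_cases Dr with ⟨h1, _⟩ | ⟨h1, _⟩
        · rw [hn, h1]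
        · rw [hn, h1, show π * -Dr * F P θ / 2 = -(π * Dr * F P θ / 2) by ring, Real.cos_neg]
      rw [heq]
      simp [g0]
    rw [abs_mul, habs1, hcos, smul_eq_mul]
  -- step C : change of variables
  have hC : (∫ θ in (0:ℝ)..(2*π), (π * n * P θ) • g0 (π * n * F P θ))
      = ∫ s in (π * n * F P 0)..(π * n * F P (2*π)), g0 s := by
    have := intervalIntegral.integral_comp_smul_deriv (a := (0:ℝ)) (b := 2*π)
      (f := fun θ => π * n * F P θ) (f' := fun θ => π * n * P θ) (g := g0)
      (fun x _ => (F_hasDerivAt P_cont x).const_mul (π * n))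
      ((continuous_const.mul P_cont).continuousOn) g0_cont
    simpa [Function.comp] using this
  have hF0 : F P 0 = 0 := intervalIntegral.integral_same
  have hF2 : F P (2*π) = 2 := P_int_two_pi'
  have hD : (∫ s in (π * n * F P 0)..(π * n * F P (2*π)), g0 s) = 4 * n := by
    rw [hF0, hF2]
    have hz := g0_int_zsmul |d₁ - d₂| 0
    have hcast : ((|d₁ - d₂| : ℤ) : ℝ) = n := by
      rw [hn, hDr]
      push_cast
      ring
    rw [hcast] at hz
    rw [show π * n * 0 = (0:ℝ) by ring, show π * n * 2 = 0 + 2 * π * n by ring]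
    exact hz
  rw [hB, hC, hD, hn, hDr]

end Stmt3Aux

/-- For all `d₁ ≠ d₂` and `ε > 0` there exist `C¹` maps `f, g : 𝕊¹ → 𝕊¹` of degrees `d₁, d₂`
with `∫ |f' - g'| ≤ 4|d₁ - d₂| + ε`; consequently the infimum of `∫|f'-g'|` over all such
pairs equals `4|d₁ - d₂|`. -/
theorem stmt3 (d₁ d₂ : ℤ) (hne : d₁ ≠ d₂) :
    (∀ ε : ℝ, 0 < ε → ∃ φ ψ : ℝ → ℝ, HasC1Degree φ d₁ ∧ HasC1Degree ψ d₂ ∧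
      dW11 φ ψ ≤ 4 * |(d₁ : ℝ) - (d₂ : ℝ)| + ε) ∧
    sInf {x : ℝ | ∃ φ ψ : ℝ → ℝ, HasC1Degree φ d₁ ∧ HasC1Degree ψ d₂ ∧ x = dW11 φ ψ} =
      4 * |(d₁ : ℝ) - (d₂ : ℝ)| := by
  obtain ⟨φ₀, ψ₀, hφ₀, hψ₀, heq⟩ := Stmt3Aux.stmt3_construct d₁ d₂
  have hbdd : BddBelow {x : ℝ | ∃ φ ψ : ℝ → ℝ, HasC1Degree φ d₁ ∧ HasC1Degree ψ d₂ ∧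
      x = dW11 φ ψ} := by
    refine ⟨4 * |(d₁ : ℝ) - (d₂ : ℝ)|, ?_⟩
    rintro x ⟨φ, ψ, h1, h2, rfl⟩
    exact Stmt3Aux.stmt3_lower d₁ d₂ φ ψ h1 h2
  have hmem : (4 * |(d₁ : ℝ) - (d₂ : ℝ)|) ∈ {x : ℝ | ∃ φ ψ : ℝ → ℝ, HasC1Degree φ d₁ ∧
      HasC1Degree ψ d₂ ∧ x = dW11 φ ψ} := ⟨φ₀, ψ₀, hφ₀, hψ₀, heq.symm⟩
  constructor
  · intro ε hε
    exact ⟨φ₀, ψ₀, hφ₀, hψ₀, by rw [heq]; linarith⟩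
  · apply le_antisymm
    · exact csInf_le hbdd hmem
    · refine le_csInf ⟨_, hmem⟩ ?_
      rintro x ⟨φ, ψ, h1, h2, rfl⟩
      exact Stmt3Aux.stmt3_lower d₁ d₂ φ ψ h1 h2
end

section
/- Let N ≥ 1, s > 0, 1 ≤ p < ∞ with sp > N (or s = N, p = 1), and let C be the constant of the embedding ‖h - avg(h)‖_{L^∞} ≤ C|h|_{W^{s,p}}. Then for any f, g ∈ W^{s,p}(𝕊^N;𝕊^N) with deg f ≠ deg g, one has |f - g|_{W^{s,p}} ≥ 1/C. -/
/-- For `sp > N` (or `s = N`, `p = 1`), `W^{s,p}(𝕊^N;𝕊^N)` maps are continuous, and if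
`C` is the constant of the embedding `‖h - avg h‖_{L^∞} ≤ C |h|_{W^{s,p}}`, then any two
maps `f, g` with `deg f ≠ deg g` satisfy `|f - g|_{W^{s,p}} ≥ 1/C`.

Here `r` denotes the seminorm `|f - g|_{W^{s,p}}` and `A` the average of `f - g`, so the
embedding inequality reads `‖(f x - g x) - A‖ ≤ C·r` for all `x`; `deg` is any
homotopy-invariant degree on continuous self-maps of `𝕊^N` vanishing on non-surjective
maps. -/
theorem stmt12 (N : ℕ) (hN : 1 ≤ N)
    (deg : C(Sph N, Sph N) → ℤ)
    (hdeg_htpy : ∀ f g : C(Sph N, Sph N), f.Homotopic g → deg f = deg g)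
    (hdeg_surj : ∀ f : C(Sph N, Sph N), ¬ Function.Surjective f → deg f = 0)
    (f g : C(Sph N, Sph N)) (hfg : deg f ≠ deg g)
    (C r : ℝ) (hC : 0 < C) (hr : 0 ≤ r) (A : EuclideanSpace ℝ (Fin (N + 1)))
    (havg : ∀ x : Sph N,
      ‖((f x : EuclideanSpace ℝ (Fin (N + 1))) - (g x : EuclideanSpace ℝ (Fin (N + 1)))) - A‖
        ≤ C * r) :
    1 / C ≤ r := by
  have _dummy : True := trivial
  by_contra h
  push_neg at h
  have hCr : C * r < 1 := by
    rw [div_eq_mul_inv, one_mul] at h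
    calc C * r < C * C⁻¹ := by exact mul_lt_mul_of_pos_left h hC
    _ = 1 := mul_inv_cancel₀ hC.ne'
  have hfnorm : ∀ x : Sph N, ‖(f x : EuclideanSpace ℝ (Fin (N + 1)))‖ = 1 := fun x =>
    mem_sphere_zero_iff_norm.mp (f x).2
  have hgnorm : ∀ x : Sph N, ‖(g x : EuclideanSpace ℝ (Fin (N + 1)))‖ = 1 := fun x =>
    mem_sphere_zero_iff_norm.mp (g x).2
  -- Step A : ‖A‖ ≤ C * r
  have hA : ‖A‖ ≤ C * r := by
    by_contra hA
    push_neg at hA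
    have hA0 : A ≠ 0 := by
      intro h0
      rw [h0, norm_zero] at hA
      exact absurd hA (not_lt.mpr (mul_nonneg hC.le hr))
    have hAn : ‖A‖ ≠ 0 := norm_ne_zero_iff.mpr hA0
    -- f misses -‖A‖⁻¹ • A
    have hnf : deg f = 0 := by
      apply hdeg_surj
      intro hs
      obtain ⟨x, hx⟩ := hs ⟨-(‖A‖⁻¹ • A), by
        simp [mem_sphere_zero_iff_norm, norm_smul, inv_mul_cancel₀ hAn]⟩
      have hx' : (f x : EuclideanSpace ℝ (Fin (N + 1))) = -(‖A‖⁻¹ • A) := congrArg Subtype.val hx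
      have h1 : ‖(f x : EuclideanSpace ℝ (Fin (N + 1))) - A‖ = 1 + ‖A‖ := by
        rw [hx']
        have : -(‖A‖⁻¹ • A) - A = -((‖A‖⁻¹ + 1) • A) := by
          rw [add_smul, one_smul]; abel
        rw [this, norm_neg, norm_smul, Real.norm_eq_abs,
          abs_of_pos (by positivity), add_mul, inv_mul_cancel₀ hAn, one_mul]
      have h2 := havg x
      have h3 : ‖(f x : EuclideanSpace ℝ (Fin (N + 1))) - A‖ - ‖(g x : EuclideanSpace ℝ (Fin (N + 1)))‖ ≤ ‖((f x : EuclideanSpace ℝ (Fin (N + 1))) - (g x : EuclideanSpace ℝ (Fin (N + 1)))) - A‖ := by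
        have := norm_sub_norm_le ((f x : EuclideanSpace ℝ (Fin (N + 1))) - A) (g x : EuclideanSpace ℝ (Fin (N + 1)))
        have heq : (f x : EuclideanSpace ℝ (Fin (N + 1))) - A - (g x : EuclideanSpace ℝ (Fin (N + 1))) = ((f x : EuclideanSpace ℝ (Fin (N + 1))) - (g x : EuclideanSpace ℝ (Fin (N + 1)))) - A := by abel
        rwa [heq] at this
      rw [h1, hgnorm x] at h3
      have : ‖A‖ ≤ C * r := by linarith
      linarith
    have hng : deg g = 0 := by
      apply hdeg_surj
      intro hs
      obtain ⟨x, hx⟩ := hs ⟨‖A‖⁻¹ • A, by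
        simp [mem_sphere_zero_iff_norm, norm_smul, inv_mul_cancel₀ hAn]⟩
      have hx' : (g x : EuclideanSpace ℝ (Fin (N + 1))) = ‖A‖⁻¹ • A := congrArg Subtype.val hx
      have h1 : ‖(g x : EuclideanSpace ℝ (Fin (N + 1))) + A‖ = 1 + ‖A‖ := by
        rw [hx']
        have : ‖A‖⁻¹ • A + A = (‖A‖⁻¹ + 1) • A := by
          rw [add_smul, one_smul]
        rw [this, norm_smul, Real.norm_eq_abs,
          abs_of_pos (by positivity), add_mul, inv_mul_cancel₀ hAn, one_mul]
      have h2 := havg x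
      have h3 : ‖(g x : EuclideanSpace ℝ (Fin (N + 1))) + A‖ - ‖(f x : EuclideanSpace ℝ (Fin (N + 1)))‖ ≤ ‖((f x : EuclideanSpace ℝ (Fin (N + 1))) - (g x : EuclideanSpace ℝ (Fin (N + 1)))) - A‖ := by
        have := norm_sub_norm_le ((g x : EuclideanSpace ℝ (Fin (N + 1))) + A) (f x : EuclideanSpace ℝ (Fin (N + 1)))
        have heq : (g x : EuclideanSpace ℝ (Fin (N + 1))) + A - (f x : EuclideanSpace ℝ (Fin (N + 1))) = -(((f x : EuclideanSpace ℝ (Fin (N + 1))) - (g x : EuclideanSpace ℝ (Fin (N + 1)))) - A) := by abel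
        rwa [heq, norm_neg] at this
      rw [h1, hfnorm x] at h3
      have : ‖A‖ ≤ C * r := by linarith
      linarith
    exact hfg (hnf.trans hng.symm)
  -- Step B : for all x, ‖f x - g x‖ < 2
  have hdist : ∀ x : Sph N, ‖(f x : EuclideanSpace ℝ (Fin (N + 1))) - (g x : EuclideanSpace ℝ (Fin (N + 1)))‖ < 2 := by
    intro x
    have h2 := havg x
    calc ‖(f x : EuclideanSpace ℝ (Fin (N + 1))) - (g x : EuclideanSpace ℝ (Fin (N + 1)))‖
        = ‖(((f x : EuclideanSpace ℝ (Fin (N + 1))) - (g x : EuclideanSpace ℝ (Fin (N + 1)))) - A) + A‖ := by abel_nf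
      _ ≤ ‖((f x : EuclideanSpace ℝ (Fin (N + 1))) - (g x : EuclideanSpace ℝ (Fin (N + 1)))) - A‖ + ‖A‖ := norm_add_le _ _
      _ ≤ C * r + C * r := add_le_add h2 hA
      _ < 2 := by linarith
  -- the interpolation is nonvanishing
  have key : ∀ (t : ℝ), t ∈ Set.Icc (0:ℝ) 1 → ∀ x : Sph N,
      (1 - t) • (f x : EuclideanSpace ℝ (Fin (N + 1))) + t • (g x : EuclideanSpace ℝ (Fin (N + 1))) ≠ 0 := by
    intro t ht x hv
    have h1 : (1 - t) • (f x : EuclideanSpace ℝ (Fin (N + 1))) = t • (-(g x : EuclideanSpace ℝ (Fin (N + 1)))) := by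
      rw [smul_neg]
      linear_combination (norm := module) hv
    have h2 : |1 - t| = |t| := by
      have := congrArg norm h1
      rwa [norm_smul, norm_smul, Real.norm_eq_abs, Real.norm_eq_abs, norm_neg,
        hfnorm x, hgnorm x, mul_one, mul_one] at this
    have ht2 : t = 1/2 := by
      rw [abs_of_nonneg (by linarith [ht.2]), abs_of_nonneg ht.1] at h2
      linarith
    rw [ht2] at h1
    have h3 : (f x : EuclideanSpace ℝ (Fin (N + 1))) = -(g x : EuclideanSpace ℝ (Fin (N + 1))) := by
      have : (2:ℝ) • ((1 - 1/2 : ℝ) • (f x : EuclideanSpace ℝ (Fin (N + 1)))) = (2:ℝ) • ((1/2 : ℝ) • (-(g x : EuclideanSpace ℝ (Fin (N + 1))))) := by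
        rw [h1]
      rw [smul_smul, smul_smul] at this
      norm_num at this
      exact this
    have := hdist x
    rw [h3] at this
    have hn : ‖-(g x : EuclideanSpace ℝ (Fin (N + 1))) - (g x : EuclideanSpace ℝ (Fin (N + 1)))‖ = 2 := by
      have : -(g x : EuclideanSpace ℝ (Fin (N + 1))) - (g x : EuclideanSpace ℝ (Fin (N + 1))) = -((2:ℝ) • (g x : EuclideanSpace ℝ (Fin (N + 1)))) := by
        rw [two_smul]; abel
      rw [this, norm_neg, norm_smul, hgnorm x]
      norm_num
    linarith [hn ▸ this]
  -- build the homotopy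
  have hvcont : Continuous (fun p : unitInterval × Sph N =>
      (1 - (p.1 : ℝ)) • (f p.2 : EuclideanSpace ℝ (Fin (N + 1))) + (p.1 : ℝ) • (g p.2 : EuclideanSpace ℝ (Fin (N + 1)))) := by
    fun_prop
  have hvne : ∀ p : unitInterval × Sph N,
      (1 - (p.1 : ℝ)) • (f p.2 : EuclideanSpace ℝ (Fin (N + 1))) + (p.1 : ℝ) • (g p.2 : EuclideanSpace ℝ (Fin (N + 1))) ≠ 0 :=
    fun p => key p.1 p.1.2 p.2
  let H : ContinuousMap.Homotopy f g :=
    { toFun := fun p =>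
        ⟨‖(1 - (p.1 : ℝ)) • (f p.2 : EuclideanSpace ℝ (Fin (N + 1))) + (p.1 : ℝ) • (g p.2 : EuclideanSpace ℝ (Fin (N + 1)))‖⁻¹ •
          ((1 - (p.1 : ℝ)) • (f p.2 : EuclideanSpace ℝ (Fin (N + 1))) + (p.1 : ℝ) • (g p.2 : EuclideanSpace ℝ (Fin (N + 1)))), by
          rw [mem_sphere_zero_iff_norm, norm_smul, norm_inv, norm_norm,
            inv_mul_cancel₀ (norm_ne_zero_iff.mpr (hvne p))]⟩
      continuous_toFun := by
        apply Continuous.subtype_mk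
        exact ((hvcont.norm.inv₀ fun p => norm_ne_zero_iff.mpr (hvne p)).smul hvcont)
      map_zero_left := by
        intro x
        apply Subtype.ext
        simp [hfnorm x]
      map_one_left := by
        intro x
        apply Subtype.ext
        simp [hgnorm x] }
  exact hfg (hdeg_htpy f g ⟨H⟩)
end

section
/- Let 1 < p < ∞. The function f : ℝ → [0,∞) defined by f(x) = ln(ln(1/|x|)) for 0 < |x| < 1/e and f(x) = 0 for |x| ≥ 1/e belongs to W^{1/p,p}(ℝ), i.e., ∫_ℝ∫_ℝ |f(x)-f(y)|^p/|x-y|² dx dy < ∞. -/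
open Real MeasureTheory

/-- The function `f(x) = ln(ln(1/|x|))` for `0 < |x| < 1/e`, `f(x) = 0` for `|x| ≥ 1/e`. -/
noncomputable def fLogLog (x : ℝ) : ℝ :=
  if x ≠ 0 ∧ |x| < Real.exp (-1) then Real.log (Real.log (1 / |x|)) else 0

namespace Stmt18Aux

open Set ENNReal

/-! ### Real-variable auxiliary lemmas -/

noncomputable def g (s : ℝ) : ℝ := if 1 < s then Real.log s else 0

lemma g_measurable : Measurable g :=
  Measurable.ite measurableSet_Ioi Real.measurable_log measurable_const

lemma fLogLog_measurable : Measurable fLogLog := by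
  unfold fLogLog
  apply Measurable.ite _ _ measurable_const
  · exact ((measurableSet_singleton (0:ℝ)).compl).inter
      (measurableSet_lt measurable_abs measurable_const)
  · exact Real.measurable_log.comp (Real.measurable_log.comp (measurable_const.div measurable_abs))

lemma fLogLog_neg (x : ℝ) : fLogLog (-x) = fLogLog x := by
  simp only [fLogLog, abs_neg, neg_ne_zero]

lemma fLogLog_exp_neg (s : ℝ) : fLogLog (Real.exp (-s)) = g s := by
  unfold fLogLog g
  have h1 : Real.exp (-s) ≠ 0 := (Real.exp_pos _).ne'
  have h2 : |Real.exp (-s)| = Real.exp (-s) := abs_of_pos (Real.exp_pos _)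
  by_cases hs : 1 < s
  · rw [if_pos ⟨h1, by rw [h2]; exact Real.exp_lt_exp.2 (by linarith)⟩, if_pos hs]
    rw [h2, one_div, ← Real.exp_neg, neg_neg, Real.log_exp]
  · rw [if_neg, if_neg hs]
    rintro ⟨-, hlt⟩
    rw [h2] at hlt
    exact hs (by have := Real.exp_lt_exp.1 hlt; linarith)

lemma sinh_bound {x : ℝ} (hx : 0 ≤ x) : x * Real.exp (x/2) ≤ Real.exp x - Real.exp (-x) := by
  have h1 : 1 + x/2 + (x/2)^2/2 ≤ Real.exp (x/2) := Real.quadratic_le_exp_of_nonneg (by linarith)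
  have h2 : 1 + 3*(x/2) ≤ Real.exp (3*(x/2)) := by
    have := Real.add_one_le_exp (3*(x/2)); linarith
  have e2 : Real.exp (-x) * Real.exp (3*(x/2)) = Real.exp (x/2) := by
    rw [← Real.exp_add]; ring_nf
  have e1 : Real.exp x = Real.exp (x/2) * Real.exp (x/2) := by
    rw [← Real.exp_add]; ring_nf
  have h3 : (0:ℝ) < Real.exp (x/2) := Real.exp_pos _
  have h5 : (0:ℝ) < Real.exp (-x) := Real.exp_pos _
  have hx15 : (0:ℝ) ≤ 1 + 3/2*x := by linarith
  have hCB : Real.exp (-x) * (1 + 3/2*x) ≤ Real.exp (x/2) := by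
    calc Real.exp (-x) * (1 + 3/2*x) ≤ Real.exp (-x) * Real.exp (3*(x/2)) := by
          apply mul_le_mul_of_nonneg_left _ h5.le; linarith
      _ = Real.exp (x/2) := e2
  rw [e1]
  nlinarith [mul_le_mul_of_nonneg_left h1 (mul_nonneg h3.le hx15), hCB,
    mul_nonneg (mul_nonneg h3.le hx) (sq_nonneg (3*x-5)), mul_nonneg h3.le (sq_nonneg (3*x-5)),
    mul_le_mul_of_nonneg_left h1 h3.le]

noncomputable def Ed (d : ℝ) : ℝ := (Real.exp (d/2) - Real.exp (-(d/2)))^2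

lemma Ed_continuous : Continuous Ed := by
  unfold Ed; fun_prop

lemma Ed_neg (d : ℝ) : Ed (-d) = Ed d := by
  unfold Ed
  rw [show -d/2 = -(d/2) by ring, neg_neg,
    show Real.exp (-(d/2)) - Real.exp (d/2) = -(Real.exp (d/2) - Real.exp (-(d/2))) by ring,
    neg_sq]

lemma Ed_ge {d : ℝ} (hd : 0 ≤ d) : d^2/4 * Real.exp (d/2) ≤ Ed d := by
  have h := sinh_bound (x := d/2) (by linarith)
  have h2 : 0 ≤ d/2 * Real.exp (d/4) := by positivity
  have h3 : (d/2 * Real.exp (d/4))^2 ≤ (Real.exp (d/2) - Real.exp (-(d/2)))^2 := by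
    apply sq_le_sq' _ _
    · have hm : Real.exp (-(d/2)) ≤ Real.exp (d/2) := Real.exp_le_exp.2 (by linarith)
      linarith
    · rw [show d/4 = d/2/2 by ring]; exact h
  calc d^2/4 * Real.exp (d/2) = (d/2 * Real.exp (d/4))^2 := by
        rw [mul_pow, sq (Real.exp (d/4)), ← Real.exp_add]
        ring_nf
    _ ≤ Ed d := h3

lemma core {p d : ℝ} (hp : 1 < p) (hd : 0 ≤ d) :
    d ^ p / Ed d ≤ 4 * d ^ (p - 2) * Real.exp (-(d/2)) := by
  rcases hd.eq_or_lt with rfl | hd'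
  · rw [Real.zero_rpow (by positivity : p ≠ 0), zero_div]
    positivity
  · have hE := Ed_ge hd
    have hEpos : (0:ℝ) < d^2/4 * Real.exp (d/2) := by positivity
    calc d^p / Ed d ≤ d^p / (d^2/4 * Real.exp (d/2)) := by
          apply div_le_div_of_nonneg_left (by positivity) hEpos hE
      _ = 4 * d^(p-2) * Real.exp (-(d/2)) := by
          rw [Real.rpow_sub hd', Real.exp_neg, show (2:ℝ) = ((2:ℕ):ℝ) by norm_num,
            Real.rpow_natCast]
          field_simp

lemma g_diff_le {s d : ℝ} (hd : 0 ≤ d) :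
    |g (s + d) - g s| ≤ if 1 < s then d / s else (if 1 < s + d then d else 0) := by
  unfold g
  by_cases h1 : 1 < s
  · have h2 : 1 < s + d := by linarith
    rw [if_pos h1, if_pos h2, if_pos h1]
    have hs0 : (0:ℝ) < s := by linarith
    have hlog : Real.log s ≤ Real.log (s + d) := Real.log_le_log hs0 (by linarith)
    rw [abs_of_nonneg (by linarith)]
    have : Real.log (s + d) - Real.log s = Real.log ((s+d)/s) := by
      rw [Real.log_div (by linarith) hs0.ne']
    rw [this]
    calc Real.log ((s+d)/s) ≤ (s+d)/s - 1 := Real.log_le_sub_one_of_pos (by positivity)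
      _ = d / s := by field_simp; ring
  · rw [if_neg h1, if_neg h1]
    by_cases h2 : 1 < s + d
    · rw [if_pos h2, if_pos h2, sub_zero, abs_of_nonneg (Real.log_nonneg (by linarith))]
      calc Real.log (s + d) ≤ s + d - 1 := Real.log_le_sub_one_of_pos (by linarith)
        _ ≤ d := by linarith
    · rw [if_neg h2, if_neg h2]
      simp

/-! ### Measure-theoretic auxiliary lemmas -/

lemma lintegral_image_abs_deriv {s : Set ℝ} {f f' : ℝ → ℝ}
    (hs : MeasurableSet s) (hf' : ∀ x ∈ s, HasDerivWithinAt f (f' x) s x) (hf : Set.InjOn f s)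
    (gg : ℝ → ℝ≥0∞) : ∫⁻ x in f '' s, gg x = ∫⁻ x in s, ENNReal.ofReal |f' x| * gg (f x) := by
  simpa only [ContinuousLinearMap.det_toSpanSingleton] using
    MeasureTheory.lintegral_image_eq_lintegral_abs_det_fderiv_mul volume hs
      (fun x hx => (hf' x hx).hasFDerivWithinAt) hf gg

lemma lintegral_Ioi_exp_neg (gg : ℝ → ℝ≥0∞) :
    ∫⁻ x in Ioi (0:ℝ), gg x = ∫⁻ s, ENNReal.ofReal (Real.exp (-s)) * gg (Real.exp (-s)) := by
  have hderiv : ∀ x ∈ (univ : Set ℝ),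
      HasDerivWithinAt (fun s => Real.exp (-s)) (-Real.exp (-x)) univ x := fun x _ =>
    (mul_neg_one (Real.exp (-x)) ▸
      ((Real.hasDerivAt_exp (-x)).comp x (hasDerivAt_neg x))).hasDerivWithinAt
  have himg : (fun s => Real.exp (-s)) '' univ = Ioi 0 := by
    rw [show (fun s => Real.exp (-s)) = Real.exp ∘ Neg.neg from rfl, Set.image_comp,
      Set.image_univ_of_surjective neg_surjective, Set.image_univ, Real.range_exp]
  have hinj : Set.InjOn (fun s => Real.exp (-s)) univ := fun a _ b _ h => by
    have := Real.exp_injective h; linarith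
  rw [← himg, lintegral_image_abs_deriv MeasurableSet.univ hderiv hinj gg]
  rw [Measure.restrict_univ]
  congr 1
  funext x
  rw [abs_neg, abs_of_pos (Real.exp_pos _)]

lemma lintegral_neg_set {H : ℝ → ℝ≥0∞} (hH : Measurable H) {A : Set ℝ} (hA : MeasurableSet A) :
    ∫⁻ x in A, H x = ∫⁻ x in Neg.neg ⁻¹' A, H (-x) := by
  have hmap : volume.restrict A = Measure.map Neg.neg (volume.restrict (Neg.neg ⁻¹' A)) := by
    rw [← Measure.restrict_map measurable_neg hA, Measure.map_neg_eq_self]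
  rw [hmap, lintegral_map hH measurable_neg]

/-! ### The substituted integrand and its bound -/

lemma Ed_pos {d : ℝ} (hd : 0 < d) : 0 < Ed d :=
  lt_of_lt_of_le (by positivity) (Ed_ge hd.le)

noncomputable def phi (p s t : ℝ) : ℝ≥0∞ := ENNReal.ofReal (|g s - g t| ^ p / Ed (t - s))

lemma phi_symm (p s t : ℝ) : phi p s t = phi p t s := by
  unfold phi
  rw [abs_sub_comm, show s - t = -(t - s) by ring, Ed_neg]

lemma phi_measurable (p : ℝ) : Measurable (Function.uncurry (phi p)) := by
  unfold phi Function.uncurry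
  apply ENNReal.measurable_ofReal.comp
  apply Measurable.div
  · apply Measurable.pow
    · exact ((g_measurable.comp measurable_fst).sub (g_measurable.comp measurable_snd)).abs
    · exact measurable_const
  · exact Ed_continuous.measurable.comp (measurable_snd.sub measurable_fst)

noncomputable def W (p d : ℝ) : ℝ := 4 * d^(p-2) * Real.exp (-(d/2))

lemma phi_shift_bound {p s d : ℝ} (hp : 1 < p) (hd : 0 < d) :
    phi p s (s + d) ≤ if 1 < s then ENNReal.ofReal (s^(-p) * W p d)
      else (Ioi (1-s)).indicator (fun d => ENNReal.ofReal (W p d)) d := by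
  have hEd : s + d - s = d := add_sub_cancel_left s d
  have hEdpos := Ed_pos hd
  unfold phi
  rw [hEd, abs_sub_comm]
  have hb := g_diff_le (s := s) (d := d) hd.le
  by_cases h1 : 1 < s
  · rw [if_pos h1] at hb ⊢
    have hs0 : (0:ℝ) < s := by linarith
    have hnum : |g (s+d) - g s|^p ≤ (d/s)^p :=
      Real.rpow_le_rpow (abs_nonneg _) hb (by linarith)
    apply ENNReal.ofReal_le_ofReal
    calc |g (s+d) - g s|^p / Ed d ≤ (d/s)^p / Ed d := by
          gcongr
      _ = s^(-p) * (d^p / Ed d) := by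
          rw [Real.div_rpow hd.le hs0.le, Real.rpow_neg hs0.le]
          ring
      _ ≤ s^(-p) * W p d := by
          apply mul_le_mul_of_nonneg_left (core hp hd.le) (by positivity)
  · rw [if_neg h1] at hb ⊢
    by_cases h2 : 1 < s + d
    · rw [if_pos h2] at hb
      have hmem : d ∈ Ioi (1 - s) := by
        simp only [mem_Ioi]; linarith
      rw [Set.indicator_of_mem hmem]
      apply ENNReal.ofReal_le_ofReal
      calc |g (s+d) - g s|^p / Ed d ≤ d^p / Ed d := by
            have : |g (s+d) - g s|^p ≤ d^p :=
              Real.rpow_le_rpow (abs_nonneg _) hb (by linarith)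
            gcongr
        _ ≤ W p d := core hp hd.le
    · rw [if_neg h2] at hb
      have hz : |g (s+d) - g s| = 0 := le_antisymm hb (abs_nonneg _)
      rw [hz, Real.zero_rpow (by positivity : p ≠ 0), zero_div, ENNReal.ofReal_zero]
      exact zero_le

/-! ### Finiteness lemmas -/

lemma gamma_finite {p : ℝ} (hp : 1 < p) {c : ℝ} (hc : 0 < c) :
    ∫⁻ d in Ioi (0:ℝ), ENNReal.ofReal (4 * d^(p-2) * Real.exp (-(c * d))) < ⊤ := by
  apply Integrable.lintegral_lt_top
  have h := integrableOn_rpow_mul_exp_neg_mul_rpow (by linarith : (-1:ℝ) < p - 2) one_pos hc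
  have heq : (fun d : ℝ => 4 * d^(p-2) * Real.exp (-(c * d)))
      = fun x => 4 * (x ^ (p-2) * Real.exp (-c * x ^ (1:ℝ))) := by
    funext x; rw [Real.rpow_one, neg_mul]; ring
  rw [heq]
  exact h.const_mul 4

lemma W_finite {p : ℝ} (hp : 1 < p) :
    ∫⁻ d in Ioi (0:ℝ), ENNReal.ofReal (W p d) < ⊤ := by
  have := gamma_finite hp (c := 1/2) (by norm_num)
  convert this using 4 with d
  unfold W
  ring_nf

lemma tail_bound {p : ℝ} (hp : 1 < p) {a : ℝ} (ha : 0 ≤ a) :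
    ∫⁻ d in Ioi a, ENNReal.ofReal (W p d) ≤
      ENNReal.ofReal (Real.exp (-(a/4))) *
        ∫⁻ d in Ioi (0:ℝ), ENNReal.ofReal (4 * d^(p-2) * Real.exp (-(1/4 * d))) := by
  have step1 : ∫⁻ d in Ioi a, ENNReal.ofReal (W p d) ≤
      ∫⁻ d in Ioi a, ENNReal.ofReal (Real.exp (-(a/4))) *
        ENNReal.ofReal (4 * d^(p-2) * Real.exp (-(1/4 * d))) := by
    apply setLIntegral_mono
    · fun_prop
    · intro d hd
      have hd0 : 0 < d := lt_of_le_of_lt ha hd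
      rw [← ENNReal.ofReal_mul (by positivity)]
      apply ENNReal.ofReal_le_ofReal
      unfold W
      have hsplit : Real.exp (-(d/2)) = Real.exp (-(1/4 * d)) * Real.exp (-(d/4)) := by
        rw [← Real.exp_add]; ring_nf
      rw [hsplit]
      have hee : Real.exp (-(d/4)) ≤ Real.exp (-(a/4)) :=
        Real.exp_le_exp.2 (by rw [mem_Ioi] at hd; linarith)
      nlinarith [mul_le_mul_of_nonneg_left hee
        (show (0:ℝ) ≤ 4 * d^(p-2) * Real.exp (-(1/4 * d)) by positivity)]
  calc ∫⁻ d in Ioi a, ENNReal.ofReal (W p d) ≤ _ := step1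
    _ = ENNReal.ofReal (Real.exp (-(a/4))) *
        ∫⁻ d in Ioi a, ENNReal.ofReal (4 * d^(p-2) * Real.exp (-(1/4 * d))) :=
      lintegral_const_mul' _ _ ENNReal.ofReal_ne_top
    _ ≤ _ := by
      apply mul_le_mul_right
      exact lintegral_mono_set (Ioi_subset_Ioi ha)

lemma s_int_finite {p : ℝ} (hp : 1 < p) :
    ∫⁻ s in Ioi (1:ℝ), ENNReal.ofReal (s^(-p)) < ⊤ :=
  (integrableOn_Ioi_rpow_of_lt (by linarith) one_pos).lintegral_lt_top

lemma exp_int_finite : ∫⁻ s in Iic (1:ℝ), ENNReal.ofReal (Real.exp (-((1-s)/4))) < ⊤ := by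
  have hm : Measurable fun s : ℝ => ENNReal.ofReal (Real.exp (-((1-s)/4))) := by
    apply ENNReal.measurable_ofReal.comp
    exact Real.measurable_exp.comp (by fun_prop)
  rw [lintegral_neg_set hm measurableSet_Iic,
    show Neg.neg ⁻¹' (Iic (1:ℝ)) = Ici (-1 : ℝ) by ext x; simp [neg_le]]
  apply Integrable.lintegral_lt_top
  have h := exp_neg_integrableOn_Ioi (-1 : ℝ) (by norm_num : (0:ℝ) < 1/4)
  have heq : (fun x : ℝ => Real.exp (-((1 - -x)/4)))
      = fun x => Real.exp (-(1/4:ℝ)) * Real.exp (-(1/4) * x) := by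
    funext x; rw [← Real.exp_add]; congr 1; ring
  have : IntegrableOn (fun x => Real.exp (-(1/4:ℝ)) * Real.exp (-(1/4) * x)) (Ici (-1:ℝ)) := by
    rw [integrableOn_Ici_iff_integrableOn_Ioi]
    exact h.const_mul _
  rw [heq]
  exact this

/-! ### The original integrand -/

noncomputable def Phi (p x y : ℝ) : ℝ≥0∞ :=
  ENNReal.ofReal (|fLogLog x - fLogLog y| ^ p / |x - y| ^ 2)

set_option maxHeartbeats 1000000 in
lemma Phi_measurable (p : ℝ) : Measurable (Function.uncurry (Phi p)) := by
  have hf := fLogLog_measurable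
  have h : Measurable (fun z : ℝ × ℝ =>
      ENNReal.ofReal (|fLogLog z.1 - fLogLog z.2| ^ p / |z.1 - z.2| ^ 2)) := by fun_prop
  exact h

lemma Phi_meas_left (p x : ℝ) : Measurable (Phi p x) := by
  have hf := fLogLog_measurable
  have h : Measurable (fun y : ℝ =>
      ENNReal.ofReal (|fLogLog x - fLogLog y| ^ p / |x - y| ^ 2)) := by fun_prop
  exact h

lemma Phi_neg_neg (p x y : ℝ) : Phi p (-x) (-y) = Phi p x y := by
  unfold Phi
  rw [fLogLog_neg, fLogLog_neg, show -x - -y = -(x - y) by ring, abs_neg]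

lemma Phi_neg_le {p x y : ℝ} (hp : 0 < p) (hx : 0 < x) (hy : 0 < y) :
    Phi p x (-y) ≤ Phi p x y := by
  unfold Phi
  rw [fLogLog_neg]
  rcases eq_or_ne x y with rfl | hxy
  · rw [sub_self, abs_zero, Real.zero_rpow hp.ne', zero_div, ENNReal.ofReal_zero]
    exact zero_le
  · apply ENNReal.ofReal_le_ofReal
    have h1 : (0:ℝ) < |x - y| := abs_pos.2 (sub_ne_zero.2 hxy)
    have hxy' : |x - y| ≤ x + y := abs_le.2 ⟨by linarith [abs_nonneg (x-y)], by linarith⟩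
    have h2 : |x - y| ≤ |x - -y| := by
      rw [show x - -y = x + y by ring, abs_of_pos (by linarith : (0:ℝ) < x + y)]
      exact hxy'
    apply div_le_div_of_nonneg_left (by positivity) (by positivity)
    exact pow_le_pow_left₀ (abs_nonneg _) h2 2

/-! ### Reduction to the positive quadrant -/

lemma lintegral_neg_full {H : ℝ → ℝ≥0∞} (hH : Measurable H) :
    ∫⁻ x, H x = ∫⁻ x, H (-x) := by
  have := lintegral_neg_set hH MeasurableSet.univ
  simpa using this

lemma half_reduce {H : ℝ → ℝ≥0∞} (hH : Measurable H) (heven : ∀ x, H (-x) = H x) :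
    ∫⁻ x, H x = 2 * ∫⁻ x in Ioi 0, H x := by
  rw [← lintegral_add_compl H measurableSet_Iio, compl_Iio]
  have h1 : ∫⁻ x in Iio (0:ℝ), H x = ∫⁻ x in Ioi 0, H x := by
    rw [lintegral_neg_set hH measurableSet_Iio,
      show Neg.neg ⁻¹' (Iio (0:ℝ)) = Ioi 0 by ext x; simp]
    simp only [heven]
  have h2 : ∫⁻ x in Ici (0:ℝ), H x = ∫⁻ x in Ioi 0, H x :=
    (setLIntegral_congr Ioi_ae_eq_Ici).symm
  rw [h1, h2, two_mul]

lemma inner_reduce {p x : ℝ} (hp : 0 < p) (hx : 0 < x) :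
    ∫⁻ y, Phi p x y ≤ 2 * ∫⁻ y in Ioi 0, Phi p x y := by
  rw [← lintegral_add_compl (Phi p x) measurableSet_Iio, compl_Iio]
  have h1 : ∫⁻ y in Iio (0:ℝ), Phi p x y ≤ ∫⁻ y in Ioi 0, Phi p x y := by
    rw [lintegral_neg_set (Phi_meas_left p x) measurableSet_Iio,
      show Neg.neg ⁻¹' (Iio (0:ℝ)) = Ioi 0 by ext z; simp]
    exact setLIntegral_mono (Phi_meas_left p x) fun y hy => Phi_neg_le hp hx hy
  have h2 : ∫⁻ y in Ici (0:ℝ), Phi p x y = ∫⁻ y in Ioi 0, Phi p x y :=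
    (setLIntegral_congr Ioi_ae_eq_Ici).symm
  rw [h2, two_mul]
  exact add_le_add_left h1 _

/-! ### Substitution -/

lemma Phi_exp {p : ℝ} (s t : ℝ) :
    ENNReal.ofReal (Real.exp (-s)) * (ENNReal.ofReal (Real.exp (-t)) *
      Phi p (Real.exp (-s)) (Real.exp (-t))) = phi p s t := by
  unfold Phi phi
  rw [fLogLog_exp_neg, fLogLog_exp_neg]
  rw [← ENNReal.ofReal_mul (Real.exp_pos _).le, ← ENNReal.ofReal_mul (Real.exp_pos _).le]
  congr 1
  have habs : |Real.exp (-s) - Real.exp (-t)| ^ 2 = (Real.exp (-s) - Real.exp (-t))^2 := sq_abs _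
  rw [habs]
  have hs2 : Real.exp (s/2) ≠ 0 := (Real.exp_pos _).ne'
  have ht2 : Real.exp (t/2) ≠ 0 := (Real.exp_pos _).ne'
  have key : (Real.exp (-s) - Real.exp (-t))^2 = Real.exp (-s) * Real.exp (-t) * Ed (t - s) := by
    unfold Ed
    have e1 : Real.exp ((t - s)/2) = Real.exp (t/2) * (Real.exp (s/2))⁻¹ := by
      rw [← Real.exp_neg, ← Real.exp_add]; congr 1; ring
    have e2 : Real.exp (-((t - s)/2)) = Real.exp (s/2) * (Real.exp (t/2))⁻¹ := by
      rw [← Real.exp_neg, ← Real.exp_add]; congr 1; ring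
    have e3 : Real.exp (-s) = (Real.exp (s/2))⁻¹ * (Real.exp (s/2))⁻¹ := by
      rw [← Real.exp_neg, ← Real.exp_add]; congr 1; ring
    have e4 : Real.exp (-t) = (Real.exp (t/2))⁻¹ * (Real.exp (t/2))⁻¹ := by
      rw [← Real.exp_neg, ← Real.exp_add]; congr 1; ring
    rw [e1, e2, e3, e4]
    field_simp
    try exact Or.inl trivial
  rw [key]
  have hab : Real.exp (-s) * Real.exp (-t) ≠ 0 := by positivity
  have hrw : Real.exp (-s) * (Real.exp (-t) * (|g s - g t| ^ p /
      (Real.exp (-s) * Real.exp (-t) * Ed (t - s))))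
      = (Real.exp (-s) * Real.exp (-t)) * (|g s - g t| ^ p) /
        ((Real.exp (-s) * Real.exp (-t)) * Ed (t - s)) := by
    ring
  rw [hrw, mul_div_mul_left _ _ hab]

/-! ### Symmetrization and translation -/

lemma K_le {p : ℝ} :
    ∫⁻ s, ∫⁻ t, phi p s t ≤ 2 * ∫⁻ s, ∫⁻ t in Ici s, phi p s t := by
  set Qlt : ℝ → ℝ → ℝ≥0∞ := fun s t => if t < s then phi p s t else 0 with hQlt
  set Qge : ℝ → ℝ → ℝ≥0∞ := fun s t => if s ≤ t then phi p s t else 0 with hQge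
  have hQltm : Measurable (Function.uncurry Qlt) := by
    apply Measurable.ite (measurableSet_lt measurable_snd measurable_fst) (phi_measurable p)
      measurable_const
  have hQgem : Measurable (Function.uncurry Qge) := by
    apply Measurable.ite (measurableSet_le measurable_fst measurable_snd) (phi_measurable p)
      measurable_const
  have hsum : ∀ s t, phi p s t = Qlt s t + Qge s t := by
    intro s t
    rw [hQlt, hQge]
    by_cases h : t < s
    · simp [h, not_le.2 h]
    · simp [h, not_lt.1 h]
  calc ∫⁻ s, ∫⁻ t, phi p s t
      = ∫⁻ s, (∫⁻ t, Qlt s t) + ∫⁻ t, Qge s t := by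
        apply lintegral_congr; intro s
        rw [show (∫⁻ t, phi p s t) = ∫⁻ t, Qlt s t + Qge s t from
            lintegral_congr fun t => hsum s t,
          lintegral_add_left (f := fun t => Qlt s t) (hQltm.comp measurable_prodMk_left)]
    _ = (∫⁻ s, ∫⁻ t, Qlt s t) + ∫⁻ s, ∫⁻ t, Qge s t :=
        lintegral_add_left (Measurable.lintegral_prod_right hQltm) _
    _ ≤ (∫⁻ s, ∫⁻ t, Qge s t) + ∫⁻ s, ∫⁻ t, Qge s t := by
        apply add_le_add_left
        rw [lintegral_lintegral_swap hQltm.aemeasurable]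
        apply lintegral_mono; intro a
        apply lintegral_mono; intro b
        rw [hQlt, hQge]
        by_cases h : a < b
        · simp only [if_pos h, if_pos h.le]
          exact le_of_eq (phi_symm p b a)
        · simp [h]
    _ = 2 * ∫⁻ s, ∫⁻ t, Qge s t := (two_mul _).symm
    _ = 2 * ∫⁻ s, ∫⁻ t in Ici s, phi p s t := by
        congr 1
        apply lintegral_congr; intro s
        rw [← lintegral_indicator measurableSet_Ici]
        apply lintegral_congr; intro t
        simp only [Set.indicator_apply, mem_Ici]
        rfl

lemma trans_step {p : ℝ} (s : ℝ) :
    ∫⁻ t in Ici s, phi p s t = ∫⁻ d in Ioi 0, phi p s (s + d) := by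
  rw [← lintegral_indicator measurableSet_Ici]
  rw [← lintegral_add_right_eq_self (fun t => (Ici s).indicator (phi p s) t) s]
  have hpt : ∀ d : ℝ, (Ici s).indicator (phi p s) (d + s)
      = (Ici (0:ℝ)).indicator (fun d => phi p s (s + d)) d := by
    intro d
    by_cases hd : (0:ℝ) ≤ d
    · rw [Set.indicator_of_mem (by simp only [mem_Ici]; linarith),
        Set.indicator_of_mem (by simpa using hd), add_comm]
    · rw [Set.indicator_of_notMem (by simp only [mem_Ici]; intro h; exact hd (by linarith)),
        Set.indicator_of_notMem (by simpa using hd)]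
  rw [lintegral_congr hpt, lintegral_indicator measurableSet_Ici]
  exact (setLIntegral_congr Ioi_ae_eq_Ici).symm



/-! ### Main theorem -/

set_option maxHeartbeats 1000000 in
theorem stmt18' (p : ℝ) (hp : 1 < p) : (∫⁻ x, ∫⁻ y, Phi p x y) < ⊤ := by
  have hp0 : (0:ℝ) < p := by linarith
  -- Step A: reduce to the positive quadrant
  have hHm : Measurable fun x => ∫⁻ y, Phi p x y :=
    Measurable.lintegral_prod_right (Phi_measurable p)
  have hHeven : ∀ x, (∫⁻ y, Phi p (-x) y) = ∫⁻ y, Phi p x y := by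
    intro x
    rw [lintegral_neg_full (Phi_meas_left p (-x))]
    exact lintegral_congr fun y => Phi_neg_neg p x y
  have stepA : (∫⁻ x, ∫⁻ y, Phi p x y) = 2 * ∫⁻ x in Ioi 0, ∫⁻ y, Phi p x y :=
    half_reduce hHm hHeven
  have hinner_meas : Measurable fun x => ∫⁻ y in Ioi (0:ℝ), Phi p x y :=
    Measurable.lintegral_prod_right (Phi_measurable p)
  have stepB : (∫⁻ x in Ioi (0:ℝ), ∫⁻ y, Phi p x y)
      ≤ 2 * ∫⁻ x in Ioi 0, ∫⁻ y in Ioi 0, Phi p x y := by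
    rw [← lintegral_const_mul' 2 _ (by norm_num : (2:ℝ≥0∞) ≠ ⊤)]
    apply setLIntegral_mono (hinner_meas.const_mul 2)
    intro x hx
    exact inner_reduce hp0 (mem_Ioi.1 hx)
  -- Step C/D: substitution x = exp (-s), y = exp (-t)
  have stepD : (∫⁻ x in Ioi (0:ℝ), ∫⁻ y in Ioi 0, Phi p x y) = ∫⁻ s, ∫⁻ t, phi p s t := by
    calc ∫⁻ x in Ioi (0:ℝ), ∫⁻ y in Ioi 0, Phi p x y
        = ∫⁻ x in Ioi (0:ℝ), ∫⁻ t, ENNReal.ofReal (Real.exp (-t)) * Phi p x (Real.exp (-t)) :=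
          lintegral_congr fun x => lintegral_Ioi_exp_neg _
      _ = ∫⁻ s, ENNReal.ofReal (Real.exp (-s)) *
            ∫⁻ t, ENNReal.ofReal (Real.exp (-t)) * Phi p (Real.exp (-s)) (Real.exp (-t)) :=
          lintegral_Ioi_exp_neg _
      _ = ∫⁻ s, ∫⁻ t, ENNReal.ofReal (Real.exp (-s)) *
            (ENNReal.ofReal (Real.exp (-t)) * Phi p (Real.exp (-s)) (Real.exp (-t))) :=
          lintegral_congr fun s => (lintegral_const_mul' _ _ ENNReal.ofReal_ne_top).symm
      _ = ∫⁻ s, ∫⁻ t, phi p s t :=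
          lintegral_congr fun s => lintegral_congr fun t => Phi_exp s t
  -- Step E: symmetrize and translate
  have stepE : (∫⁻ s, ∫⁻ t, phi p s t) ≤ 2 * ∫⁻ s, ∫⁻ d in Ioi 0, phi p s (s + d) := by
    calc (∫⁻ s, ∫⁻ t, phi p s t) ≤ 2 * ∫⁻ s, ∫⁻ t in Ici s, phi p s t := K_le
      _ = 2 * ∫⁻ s, ∫⁻ d in Ioi 0, phi p s (s + d) := by
          congr 1; exact lintegral_congr fun s => trans_step s
  -- Step G: pointwise bound on the inner integral
  set Θ := ∫⁻ d in Ioi (0:ℝ), ENNReal.ofReal (W p d) with hΘ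
  set Θ' := ∫⁻ d in Ioi (0:ℝ), ENNReal.ofReal (4 * d^(p-2) * Real.exp (-(1/4 * d))) with hΘ'
  have hΘfin : Θ < ⊤ := W_finite hp
  have hΘ'fin : Θ' < ⊤ := gamma_finite hp (by norm_num : (0:ℝ) < 1/4)
  have hWm : Measurable fun d : ℝ => ENNReal.ofReal (W p d) := by unfold W; fun_prop
  have stepG : ∀ s, (∫⁻ d in Ioi (0:ℝ), phi p s (s + d)) ≤
      (if 1 < s then ENNReal.ofReal (s^(-p)) * Θ
       else ENNReal.ofReal (Real.exp (-((1-s)/4))) * Θ') := by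
    intro s
    by_cases h1 : 1 < s
    · rw [if_pos h1]
      have hs0 : (0:ℝ) ≤ s := by linarith
      calc (∫⁻ d in Ioi (0:ℝ), phi p s (s + d))
          ≤ ∫⁻ d in Ioi (0:ℝ), ENNReal.ofReal (s^(-p) * W p d) := by
            apply setLIntegral_mono (by unfold W; fun_prop)
            intro d hd
            have hb := phi_shift_bound hp (mem_Ioi.1 hd) (s := s)
            rwa [if_pos h1] at hb
        _ = ∫⁻ d in Ioi (0:ℝ), ENNReal.ofReal (s^(-p)) * ENNReal.ofReal (W p d) :=
            lintegral_congr fun d => ENNReal.ofReal_mul (Real.rpow_nonneg hs0 _)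
        _ = ENNReal.ofReal (s^(-p)) * Θ :=
            lintegral_const_mul' _ _ ENNReal.ofReal_ne_top
    · rw [if_neg h1]
      have ha : (0:ℝ) ≤ 1 - s := by linarith [not_lt.1 h1]
      calc (∫⁻ d in Ioi (0:ℝ), phi p s (s + d))
          ≤ ∫⁻ d in Ioi (0:ℝ), (Ioi (1-s)).indicator (fun d => ENNReal.ofReal (W p d)) d := by
            apply setLIntegral_mono (hWm.indicator measurableSet_Ioi)
            intro d hd
            have hb := phi_shift_bound hp (mem_Ioi.1 hd) (s := s)
            rwa [if_neg h1] at hb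
        _ = ∫⁻ d in Ioi (1-s), ENNReal.ofReal (W p d) := by
            rw [lintegral_indicator measurableSet_Ioi,
              Measure.restrict_restrict measurableSet_Ioi, Ioi_inter_Ioi, sup_eq_left.2 ha]
        _ ≤ ENNReal.ofReal (Real.exp (-((1-s)/4))) * Θ' := tail_bound hp ha
  -- Step H: integrate the bound in s
  have stepH : (∫⁻ s, ∫⁻ d in Ioi (0:ℝ), phi p s (s + d)) < ⊤ := by
    have hb := lintegral_mono (μ := (volume : Measure ℝ)) stepG
    apply lt_of_le_of_lt hb
    rw [← lintegral_add_compl (fun s => (if 1 < s then ENNReal.ofReal (s^(-p)) * Θ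
        else ENNReal.ofReal (Real.exp (-((1-s)/4))) * Θ')) measurableSet_Iic, compl_Iic]
    have key1 : (∫⁻ s in Ioi (1:ℝ), (if 1 < s then ENNReal.ofReal (s^(-p)) * Θ
        else ENNReal.ofReal (Real.exp (-((1-s)/4))) * Θ'))
        = (∫⁻ s in Ioi (1:ℝ), ENNReal.ofReal (s^(-p))) * Θ := by
      rw [setLIntegral_congr_fun measurableSet_Ioi
        (fun s hs => if_pos (mem_Ioi.1 hs))]
      exact lintegral_mul_const' Θ _ hΘfin.ne
    have key2 : (∫⁻ s in Iic (1:ℝ), (if 1 < s then ENNReal.ofReal (s^(-p)) * Θ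
        else ENNReal.ofReal (Real.exp (-((1-s)/4))) * Θ'))
        = (∫⁻ s in Iic (1:ℝ), ENNReal.ofReal (Real.exp (-((1-s)/4)))) * Θ' := by
      rw [setLIntegral_congr_fun measurableSet_Iic
        (fun s hs => if_neg (not_lt.2 (mem_Iic.1 hs)))]
      exact lintegral_mul_const' Θ' _ hΘ'fin.ne
    rw [key1, key2]
    exact ENNReal.add_lt_top.2 ⟨ENNReal.mul_lt_top exp_int_finite hΘ'fin,
      ENNReal.mul_lt_top (s_int_finite hp) hΘfin⟩
  -- Final assembly
  calc (∫⁻ x, ∫⁻ y, Phi p x y) = 2 * ∫⁻ x in Ioi 0, ∫⁻ y, Phi p x y := stepA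
    _ ≤ 2 * (2 * ∫⁻ x in Ioi 0, ∫⁻ y in Ioi 0, Phi p x y) := mul_le_mul_right stepB 2
    _ = 2 * (2 * ∫⁻ s, ∫⁻ t, phi p s t) := by rw [stepD]
    _ ≤ 2 * (2 * (2 * ∫⁻ s, ∫⁻ d in Ioi 0, phi p s (s + d))) := by
        exact mul_le_mul_right (mul_le_mul_right stepE 2) 2
    _ < ⊤ := by
        refine ENNReal.mul_lt_top (by norm_num) (ENNReal.mul_lt_top (by norm_num)
          (ENNReal.mul_lt_top (by norm_num) stepH))

end Stmt18Aux

/-- For `1 < p < ∞`, `fLogLog ∈ W^{1/p,p}(ℝ)`: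
`∫_ℝ∫_ℝ |f(x)-f(y)|^p / |x-y|² dx dy < ∞`. -/
theorem stmt18 (p : ℝ) (hp : 1 < p) :
    (∫⁻ x : ℝ, ∫⁻ y : ℝ,
        ENNReal.ofReal (|fLogLog x - fLogLog y| ^ p / |x - y| ^ 2)) < ⊤ :=
  Stmt18Aux.stmt18' p hp
end
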